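/- arXiv:1108.5637 — 10 statements merged into one kernel-verified Lean document; each statement's English description precedes it below -/
import Mathlib

section
/- Let G be a weighted graph with vertex weight ν > 0, let S₀, S₁ be disjoint sets partitioning V(G), with D₀ = sup_{v∈S₀} w_{S₁}(v)/ν(v) and K₀ = inf_{v∈S₁} w_{S₀}(v)/ν(v) > 0, where w_A(v) = ∑_{u∈A} w(u,v). Then for every f ∈ ℓ²_ν(G): ‖f‖_{2,ν} ≤ (1 + D₀/K₀)^{1/2} ‖f|_{S₀}‖_{2,ν} + K₀^{−1/2} ‖∇_w f‖₂. -/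
open Finset

lemma minkowski' {ι : Type*} (s : Finset ι) (a b : ι → ℝ) :
    Real.sqrt (∑ i ∈ s, (a i + b i)^2) ≤
      Real.sqrt (∑ i ∈ s, a i^2) + Real.sqrt (∑ i ∈ s, b i^2) := by
  have ha : (0:ℝ) ≤ ∑ i ∈ s, a i ^ 2 := by positivity
  have hb : (0:ℝ) ≤ ∑ i ∈ s, b i ^ 2 := by positivity
  have hcs := Real.sum_mul_le_sqrt_mul_sqrt s a b
  have key : ∑ i ∈ s, (a i + b i)^2 ≤
      (Real.sqrt (∑ i ∈ s, a i^2) + Real.sqrt (∑ i ∈ s, b i^2))^2 := by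
    have : ∑ i ∈ s, (a i + b i)^2
        = ∑ i ∈ s, a i^2 + 2 * ∑ i ∈ s, a i * b i + ∑ i ∈ s, b i^2 := by
      rw [Finset.mul_sum, ← Finset.sum_add_distrib, ← Finset.sum_add_distrib]
      exact Finset.sum_congr rfl fun i _ => by ring
    rw [this, add_sq, Real.sq_sqrt ha, Real.sq_sqrt hb]
    nlinarith [Real.sqrt_nonneg (∑ i ∈ s, a i^2), Real.sqrt_nonneg (∑ i ∈ s, b i^2)]
  calc Real.sqrt (∑ i ∈ s, (a i + b i)^2)
      ≤ Real.sqrt ((Real.sqrt (∑ i ∈ s, a i^2) + Real.sqrt (∑ i ∈ s, b i^2))^2) :=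
        Real.sqrt_le_sqrt key
    _ = _ := Real.sqrt_sq (by positivity)

/-- two-set Poincaré inequality, p = 2. -/
theorem statement1 {V : Type*} [Fintype V] [DecidableEq V] (w : V → V → ℝ)
    (hsymm : ∀ u v, w u v = w v u) (hdiag : ∀ u, w u u = 0)
    (hnonneg : ∀ u v, 0 ≤ w u v) (ν : V → ℝ) (hν : ∀ v, 0 < ν v)
    (S₀ S₁ : Finset V) (hdisj : Disjoint S₀ S₁) (hcover : S₀ ∪ S₁ = Finset.univ)
    (D₀ K₀ : ℝ) (hK₀pos : 0 < K₀)
    (hK₀ : ∀ v ∈ S₁, K₀ * ν v ≤ ∑ u ∈ S₀, w u v)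
    (hD₀ : ∀ v ∈ S₀, ∑ u ∈ S₁, w u v ≤ D₀ * ν v)
    (f : V → ℂ) :
    Real.sqrt (∑ v, ‖f v‖ ^ 2 * ν v) ≤
      Real.sqrt (1 + D₀ / K₀) * Real.sqrt (∑ v ∈ S₀, ‖f v‖ ^ 2 * ν v) +
        (1 / Real.sqrt K₀) *
          Real.sqrt (∑ u, ∑ v, ‖f u - f v‖ ^ 2 * w u v) := by
  classical
  set s : Finset (V ⊕ V × V) := S₀.disjSum (S₀ ×ˢ S₁) with hs
  set a : V ⊕ V × V → ℝ :=
    Sum.elim (fun u => ‖f u‖ * Real.sqrt (ν u))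
      (fun p => ‖f p.1‖ * Real.sqrt (w p.1 p.2 / K₀)) with ha
  set b : V ⊕ V × V → ℝ :=
    Sum.elim (fun _ => 0)
      (fun p => ‖f p.2 - f p.1‖ * Real.sqrt (w p.1 p.2 / K₀)) with hb
  have hwK : ∀ u v, (0:ℝ) ≤ w u v / K₀ := fun u v => div_nonneg (hnonneg u v) hK₀pos.le
  -- Step 1 : LHS² ≤ ∑ (a+b)²
  have hstep1 : ∑ v, ‖f v‖ ^ 2 * ν v ≤ ∑ i ∈ s, (a i + b i) ^ 2 := by
    calc ∑ v, ‖f v‖ ^ 2 * ν v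
        = ∑ v ∈ S₀, ‖f v‖ ^ 2 * ν v + ∑ v ∈ S₁, ‖f v‖ ^ 2 * ν v := by
          rw [← hcover, Finset.sum_union hdisj]
      _ ≤ ∑ v ∈ S₀, ‖f v‖ ^ 2 * ν v
            + ∑ u ∈ S₀, ∑ v ∈ S₁, ‖f v‖ ^ 2 * (w u v / K₀) := by
          apply add_le_add_right
          rw [Finset.sum_comm]
          apply Finset.sum_le_sum
          intro v hv
          calc ‖f v‖ ^ 2 * ν v
              ≤ ‖f v‖ ^ 2 * ((∑ u ∈ S₀, w u v) / K₀) := by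
                apply mul_le_mul_of_nonneg_left _ (by positivity)
                rw [le_div_iff₀ hK₀pos]
                linarith [hK₀ v hv]
            _ = ∑ u ∈ S₀, ‖f v‖ ^ 2 * (w u v / K₀) := by
                rw [Finset.sum_div, Finset.mul_sum]
      _ ≤ ∑ i ∈ s, (a i + b i) ^ 2 := by
          rw [hs, Finset.sum_disjSum, Finset.sum_product]
          apply add_le_add
          · apply le_of_eq
            apply Finset.sum_congr rfl
            intro u _
            simp only [ha, hb, Sum.elim_inl, add_zero, mul_pow,
              Real.sq_sqrt (hν u).le]
          · apply Finset.sum_le_sum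
            intro u _
            apply Finset.sum_le_sum
            intro v _
            simp only [ha, hb, Sum.elim_inr]
            have htri : ‖f v‖ ≤ ‖f u‖ + ‖f v - f u‖ := by
              simpa using norm_add_le (f u) (f v - f u)
            calc ‖f v‖ ^ 2 * (w u v / K₀)
                ≤ (‖f u‖ + ‖f v - f u‖) ^ 2 * (w u v / K₀) := by
                  apply mul_le_mul_of_nonneg_right _ (hwK u v)
                  exact pow_le_pow_left₀ (norm_nonneg _) htri 2
              _ = (‖f u‖ * Real.sqrt (w u v / K₀)
                    + ‖f v - f u‖ * Real.sqrt (w u v / K₀)) ^ 2 := by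
                  rw [← add_mul, mul_pow, Real.sq_sqrt (hwK u v)]
  -- Step 2 : ∑ a² ≤ (1+D₀/K₀) * ‖f‖²_{S₀}
  have hstep2 : Real.sqrt (∑ i ∈ s, a i ^ 2) ≤
      Real.sqrt (1 + D₀ / K₀) * Real.sqrt (∑ v ∈ S₀, ‖f v‖ ^ 2 * ν v) := by
    have hB : (0:ℝ) ≤ ∑ v ∈ S₀, ‖f v‖ ^ 2 * ν v :=
      Finset.sum_nonneg fun v _ => mul_nonneg (by positivity) (hν v).le
    have hsum : ∑ i ∈ s, a i ^ 2 ≤ (1 + D₀ / K₀) * ∑ v ∈ S₀, ‖f v‖ ^ 2 * ν v := by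
      rw [hs, Finset.sum_disjSum, Finset.sum_product]
      have h1 : ∑ u ∈ S₀, a (Sum.inl u) ^ 2 = ∑ v ∈ S₀, ‖f v‖ ^ 2 * ν v := by
        apply Finset.sum_congr rfl
        intro u _
        simp only [ha, Sum.elim_inl, mul_pow, Real.sq_sqrt (hν u).le]
      have h2 : ∑ u ∈ S₀, ∑ v ∈ S₁, a (Sum.inr (u, v)) ^ 2
          ≤ (D₀ / K₀) * ∑ v ∈ S₀, ‖f v‖ ^ 2 * ν v := by
        rw [Finset.mul_sum]
        apply Finset.sum_le_sum
        intro u hu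
        have hDu : ∑ v ∈ S₁, w u v ≤ D₀ * ν u := by
          calc ∑ v ∈ S₁, w u v = ∑ v ∈ S₁, w v u := Finset.sum_congr rfl fun v _ => hsymm u v
            _ ≤ D₀ * ν u := hD₀ u hu
        calc ∑ v ∈ S₁, a (Sum.inr (u, v)) ^ 2
            = ‖f u‖ ^ 2 * ((∑ v ∈ S₁, w u v) / K₀) := by
              rw [Finset.sum_div, Finset.mul_sum]
              apply Finset.sum_congr rfl
              intro v _
              simp only [ha, Sum.elim_inr, mul_pow, Real.sq_sqrt (hwK u v)]
          _ ≤ ‖f u‖ ^ 2 * (D₀ * ν u / K₀) := by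
              apply mul_le_mul_of_nonneg_left _ (by positivity)
              exact div_le_div_of_nonneg_right hDu hK₀pos.le
          _ = D₀ / K₀ * (‖f u‖ ^ 2 * ν u) := by ring
      calc ∑ u ∈ S₀, a (Sum.inl u) ^ 2 + ∑ u ∈ S₀, ∑ v ∈ S₁, a (Sum.inr (u, v)) ^ 2
          ≤ ∑ v ∈ S₀, ‖f v‖ ^ 2 * ν v
            + (D₀ / K₀) * ∑ v ∈ S₀, ‖f v‖ ^ 2 * ν v := by
            rw [h1]; exact add_le_add_right h2 _
        _ = (1 + D₀ / K₀) * ∑ v ∈ S₀, ‖f v‖ ^ 2 * ν v := by ring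
    calc Real.sqrt (∑ i ∈ s, a i ^ 2)
        ≤ Real.sqrt ((1 + D₀ / K₀) * ∑ v ∈ S₀, ‖f v‖ ^ 2 * ν v) :=
          Real.sqrt_le_sqrt hsum
      _ = _ := Real.sqrt_mul' _ hB ▸ rfl
  -- Step 3 : ∑ b² ≤ (1/K₀) * ‖∇f‖²
  have hstep3 : Real.sqrt (∑ i ∈ s, b i ^ 2) ≤
      (1 / Real.sqrt K₀) * Real.sqrt (∑ u, ∑ v, ‖f u - f v‖ ^ 2 * w u v) := by
    have hsum : ∑ i ∈ s, b i ^ 2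
        ≤ (1 / K₀) * ∑ u, ∑ v, ‖f u - f v‖ ^ 2 * w u v := by
      rw [hs, Finset.sum_disjSum, Finset.sum_product]
      have h0 : ∑ u ∈ S₀, b (Sum.inl u) ^ 2 = 0 := by
        apply Finset.sum_eq_zero
        intro u _
        simp [hb]
      rw [h0, zero_add, Finset.mul_sum]
      calc ∑ u ∈ S₀, ∑ v ∈ S₁, b (Sum.inr (u, v)) ^ 2
          = ∑ u ∈ S₀, ∑ v ∈ S₁, (1 / K₀) * (‖f u - f v‖ ^ 2 * w u v) := by
            apply Finset.sum_congr rfl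
            intro u _
            apply Finset.sum_congr rfl
            intro v _
            simp only [hb, Sum.elim_inr, mul_pow, Real.sq_sqrt (hwK u v)]
            rw [norm_sub_rev]
            ring
        _ ≤ ∑ u, ∑ v ∈ S₁, (1 / K₀) * (‖f u - f v‖ ^ 2 * w u v) := by
            apply Finset.sum_le_sum_of_subset_of_nonneg (Finset.subset_univ _)
            intro u _ _
            exact Finset.sum_nonneg fun v _ => mul_nonneg (by positivity)
              (mul_nonneg (by positivity) (hnonneg u v))
        _ ≤ ∑ u, ∑ v, (1 / K₀) * (‖f u - f v‖ ^ 2 * w u v) := by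
            apply Finset.sum_le_sum
            intro u _
            apply Finset.sum_le_sum_of_subset_of_nonneg (Finset.subset_univ _)
            intro v _ _
            exact mul_nonneg (by positivity) (mul_nonneg (by positivity) (hnonneg u v))
        _ = ∑ u, 1 / K₀ * ∑ v, ‖f u - f v‖ ^ 2 * w u v := by
            apply Finset.sum_congr rfl
            intro u _
            rw [Finset.mul_sum]
    calc Real.sqrt (∑ i ∈ s, b i ^ 2)
        ≤ Real.sqrt ((1 / K₀) * ∑ u, ∑ v, ‖f u - f v‖ ^ 2 * w u v) :=
          Real.sqrt_le_sqrt hsum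
      _ = Real.sqrt (1 / K₀) * Real.sqrt (∑ u, ∑ v, ‖f u - f v‖ ^ 2 * w u v) :=
          Real.sqrt_mul (by positivity) _
      _ = _ := by
          rw [one_div, Real.sqrt_inv, one_div]
  -- combine
  calc Real.sqrt (∑ v, ‖f v‖ ^ 2 * ν v)
      ≤ Real.sqrt (∑ i ∈ s, (a i + b i) ^ 2) := Real.sqrt_le_sqrt hstep1
    _ ≤ Real.sqrt (∑ i ∈ s, a i ^ 2) + Real.sqrt (∑ i ∈ s, b i ^ 2) := minkowski' s a b
    _ ≤ _ := add_le_add hstep2 hstep3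
end

section
/- Let G be a weighted graph with vertex weight ν, and S₀, S₁ disjoint subsets of V(G) with K̂₀ = inf_{v∈S₀} w_{S₁}(v)/ν(v) > 0 and D̂₀ = sup_{v∈S₁} w_{S₀}(v)/ν(v) > 0. Then for every f ∈ ℓ²_ν(G): (1 + K̂₀/D̂₀)^{1/2} ‖f|_{S₀}‖_{2,ν} ≤ ‖f‖_{2,ν} + D̂₀^{−1/2} ‖∇_w f‖₂. -/
open Finset

/-- Minkowski inequality for finset sums. -/
lemma minkowski_aux {ι : Type*} (s : Finset ι) (x y : ι → ℝ) :
    Real.sqrt (∑ i ∈ s, (x i + y i) ^ 2) ≤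
      Real.sqrt (∑ i ∈ s, x i ^ 2) + Real.sqrt (∑ i ∈ s, y i ^ 2) := by
  have hx : (0:ℝ) ≤ ∑ i ∈ s, x i ^ 2 := Finset.sum_nonneg fun i _ => sq_nonneg _
  have hy : (0:ℝ) ≤ ∑ i ∈ s, y i ^ 2 := Finset.sum_nonneg fun i _ => sq_nonneg _
  have hcs := Real.sum_mul_le_sqrt_mul_sqrt s x y
  have hsum : ∑ i ∈ s, (x i + y i) ^ 2 =
      (∑ i ∈ s, x i ^ 2) + 2 * (∑ i ∈ s, x i * y i) + (∑ i ∈ s, y i ^ 2) := by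
    simp only [add_sq]
    rw [Finset.sum_add_distrib, Finset.sum_add_distrib, Finset.mul_sum]
    simp only [mul_assoc]
  have h1 : ∑ i ∈ s, (x i + y i) ^ 2 ≤
      (Real.sqrt (∑ i ∈ s, x i ^ 2) + Real.sqrt (∑ i ∈ s, y i ^ 2)) ^ 2 := by
    have e1 : Real.sqrt (∑ i ∈ s, x i ^ 2) ^ 2 = ∑ i ∈ s, x i ^ 2 := Real.sq_sqrt hx
    have e2 : Real.sqrt (∑ i ∈ s, y i ^ 2) ^ 2 = ∑ i ∈ s, y i ^ 2 := Real.sq_sqrt hy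
    nlinarith [hcs, hsum]
  calc Real.sqrt (∑ i ∈ s, (x i + y i) ^ 2)
      ≤ Real.sqrt ((Real.sqrt (∑ i ∈ s, x i ^ 2) + Real.sqrt (∑ i ∈ s, y i ^ 2)) ^ 2) :=
        Real.sqrt_le_sqrt h1
    _ = _ := Real.sqrt_sq (by positivity)

/-- two-set reverse (lower) estimate, p = 2. -/
theorem statement2 {V : Type*} [Fintype V] (w : V → V → ℝ)
    (hsymm : ∀ u v, w u v = w v u) (hdiag : ∀ u, w u u = 0)
    (hnonneg : ∀ u v, 0 ≤ w u v) (ν : V → ℝ) (hν : ∀ v, 0 < ν v)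
    (S₀ S₁ : Finset V) (hdisj : Disjoint S₀ S₁)
    (K₀ D₀ : ℝ) (hK₀pos : 0 < K₀) (hD₀pos : 0 < D₀)
    (hK₀ : ∀ v ∈ S₀, K₀ * ν v ≤ ∑ u ∈ S₁, w u v)
    (hD₀ : ∀ v ∈ S₁, ∑ u ∈ S₀, w u v ≤ D₀ * ν v)
    (f : V → ℂ) :
    Real.sqrt (1 + K₀ / D₀) * Real.sqrt (∑ v ∈ S₀, ‖f v‖ ^ 2 * ν v) ≤
      Real.sqrt (∑ v, ‖f v‖ ^ 2 * ν v) +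
        (1 / Real.sqrt D₀) *
          Real.sqrt (∑ u, ∑ v, ‖f u - f v‖ ^ 2 * w u v) := by
  set A : ℝ := ∑ v ∈ S₀, ‖f v‖ ^ 2 * ν v with hA
  set B : ℝ := ∑ v ∈ S₁, ‖f v‖ ^ 2 * ν v with hB
  set N : ℝ := ∑ v, ‖f v‖ ^ 2 * ν v with hN
  set E : ℝ := ∑ u, ∑ v, ‖f u - f v‖ ^ 2 * w u v with hE
  have hAnn : 0 ≤ A := Finset.sum_nonneg fun v _ => mul_nonneg (sq_nonneg _) (hν v).le
  have hBnn : 0 ≤ B := Finset.sum_nonneg fun v _ => mul_nonneg (sq_nonneg _) (hν v).le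
  have hNnn : 0 ≤ N := Finset.sum_nonneg fun v _ => mul_nonneg (sq_nonneg _) (hν v).le
  have hEnn : 0 ≤ E := Finset.sum_nonneg fun u _ =>
    Finset.sum_nonneg fun v _ => mul_nonneg (by positivity) (hnonneg u v)
  -- sums over the product S₀ ×ˢ S₁, pair p = (v, u), v ∈ S₀, u ∈ S₁
  set Q : ℝ := ∑ p ∈ S₀ ×ˢ S₁, ‖f p.1‖ ^ 2 * w p.2 p.1 with hQ
  set P : ℝ := ∑ p ∈ S₀ ×ˢ S₁, ‖f p.2‖ ^ 2 * w p.2 p.1 with hP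
  set R : ℝ := ∑ p ∈ S₀ ×ˢ S₁, ‖f p.2 - f p.1‖ ^ 2 * w p.2 p.1 with hR
  have hQnn : 0 ≤ Q := Finset.sum_nonneg fun p _ => mul_nonneg (by positivity) (hnonneg _ _)
  -- Step 1: K₀ * A ≤ Q
  have step1 : K₀ * A ≤ Q := by
    rw [hQ, Finset.sum_product, hA, Finset.mul_sum]
    refine Finset.sum_le_sum fun v hv => ?_
    have h := hK₀ v hv
    calc K₀ * (‖f v‖ ^ 2 * ν v) = ‖f v‖ ^ 2 * (K₀ * ν v) := by ring
      _ ≤ ‖f v‖ ^ 2 * ∑ u ∈ S₁, w u v := by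
          exact mul_le_mul_of_nonneg_left h (by positivity)
      _ = ∑ u ∈ S₁, ‖f v‖ ^ 2 * w u v := by rw [Finset.mul_sum]
  -- Step 2 (Minkowski): √Q ≤ √P + √R
  have step2 : Real.sqrt Q ≤ Real.sqrt P + Real.sqrt R := by
    have key := minkowski_aux (S₀ ×ˢ S₁)
      (fun p => ‖f p.2‖ * Real.sqrt (w p.2 p.1))
      (fun p => ‖f p.2 - f p.1‖ * Real.sqrt (w p.2 p.1))
    have eP : ∑ p ∈ S₀ ×ˢ S₁, (‖f p.2‖ * Real.sqrt (w p.2 p.1)) ^ 2 = P := by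
      refine Finset.sum_congr rfl fun p _ => ?_
      rw [mul_pow, Real.sq_sqrt (hnonneg _ _)]
    have eR : ∑ p ∈ S₀ ×ˢ S₁, (‖f p.2 - f p.1‖ * Real.sqrt (w p.2 p.1)) ^ 2 = R := by
      refine Finset.sum_congr rfl fun p _ => ?_
      rw [mul_pow, Real.sq_sqrt (hnonneg _ _)]
    rw [eP, eR] at key
    refine le_trans ?_ key
    refine Real.sqrt_le_sqrt (Finset.sum_le_sum fun p _ => ?_)
    have htri : ‖f p.1‖ ≤ ‖f p.2‖ + ‖f p.2 - f p.1‖ := by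
      have h := norm_sub_le_norm_sub_add_norm_sub (f p.1) (f p.2) 0
      simp only [sub_zero] at h
      rw [norm_sub_rev (f p.1) (f p.2)] at h
      linarith
    calc ‖f p.1‖ ^ 2 * w p.2 p.1
        = (‖f p.1‖ * Real.sqrt (w p.2 p.1)) ^ 2 := by
          rw [mul_pow, Real.sq_sqrt (hnonneg _ _)]
      _ ≤ ((‖f p.2‖ + ‖f p.2 - f p.1‖) * Real.sqrt (w p.2 p.1)) ^ 2 := by
          refine pow_le_pow_left₀ (by positivity) ?_ 2
          exact mul_le_mul_of_nonneg_right htri (Real.sqrt_nonneg _)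
      _ = (‖f p.2‖ * Real.sqrt (w p.2 p.1) +
            ‖f p.2 - f p.1‖ * Real.sqrt (w p.2 p.1)) ^ 2 := by ring
  -- Step 3: P ≤ D₀ * B
  have step3 : P ≤ D₀ * B := by
    rw [hP, Finset.sum_product, Finset.sum_comm, hB, Finset.mul_sum]
    refine Finset.sum_le_sum fun u hu => ?_
    have h := hD₀ u hu
    calc ∑ v ∈ S₀, ‖f u‖ ^ 2 * w u v
        = ‖f u‖ ^ 2 * ∑ v ∈ S₀, w v u := by
          rw [Finset.mul_sum]; exact Finset.sum_congr rfl fun v _ => by rw [hsymm]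
      _ ≤ ‖f u‖ ^ 2 * (D₀ * ν u) := mul_le_mul_of_nonneg_left h (by positivity)
      _ = D₀ * (‖f u‖ ^ 2 * ν u) := by ring
  -- Step 4: R ≤ E
  have step4 : R ≤ E := by
    have hR' : R = ∑ u ∈ S₁, ∑ v ∈ S₀, ‖f u - f v‖ ^ 2 * w u v := by
      rw [hR, Finset.sum_product, Finset.sum_comm]
    rw [hR', hE]
    have hterm : ∀ u v : V, 0 ≤ ‖f u - f v‖ ^ 2 * w u v :=
      fun u v => mul_nonneg (sq_nonneg _) (hnonneg u v)
    calc ∑ u ∈ S₁, ∑ v ∈ S₀, ‖f u - f v‖ ^ 2 * w u v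
        ≤ ∑ u ∈ S₁, ∑ v : V, ‖f u - f v‖ ^ 2 * w u v :=
          Finset.sum_le_sum fun u _ =>
            Finset.sum_le_sum_of_subset_of_nonneg (Finset.subset_univ _)
              fun v _ _ => hterm u v
      _ ≤ _ := Finset.sum_le_sum_of_subset_of_nonneg (Finset.subset_univ _)
              fun u _ _ => Finset.sum_nonneg fun v _ => hterm u v
  -- Step 5: A + B ≤ N
  have step5 : A + B ≤ N := by
    classical
    rw [hA, hB, hN, ← Finset.sum_union hdisj]
    refine Finset.sum_le_sum_of_subset_of_nonneg (Finset.subset_univ _)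
      fun v _ _ => mul_nonneg (sq_nonneg _) (hν v).le
  -- Combine: √(K₀ A) ≤ √(D₀ B) + √E
  have hchain : Real.sqrt (K₀ * A) ≤ Real.sqrt (D₀ * B) + Real.sqrt E :=
    calc Real.sqrt (K₀ * A) ≤ Real.sqrt Q := Real.sqrt_le_sqrt step1
      _ ≤ Real.sqrt P + Real.sqrt R := step2
      _ ≤ Real.sqrt (D₀ * B) + Real.sqrt E :=
          add_le_add (Real.sqrt_le_sqrt step3) (Real.sqrt_le_sqrt step4)
  -- Final arithmetic
  clear_value A B N E Q P R
  clear hQ hP hR hA hB hN hE step1 step2 step3 step4 hK₀ hD₀ hQnn hν hsymm hdiag hnonneg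
  set a := Real.sqrt A
  set b := Real.sqrt B
  set n := Real.sqrt N
  set e := Real.sqrt E
  set s := Real.sqrt D₀
  have hs : 0 < s := Real.sqrt_pos.2 hD₀pos
  have ha2 : a ^ 2 = A := Real.sq_sqrt hAnn
  have hb2 : b ^ 2 = B := Real.sq_sqrt hBnn
  have hn2 : n ^ 2 = N := Real.sq_sqrt hNnn
  have he2 : e ^ 2 = E := Real.sq_sqrt hEnn
  have hs2 : s ^ 2 = D₀ := Real.sq_sqrt hD₀pos.le
  have hKA : Real.sqrt (K₀ * A) = Real.sqrt K₀ * a := Real.sqrt_mul hK₀pos.le _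
  have hDB : Real.sqrt (D₀ * B) = s * b := Real.sqrt_mul hD₀pos.le _
  rw [hKA, hDB] at hchain
  have hK2 : Real.sqrt K₀ ^ 2 = K₀ := Real.sq_sqrt hK₀pos.le
  have haKnn : 0 ≤ Real.sqrt K₀ * a := mul_nonneg (Real.sqrt_nonneg _) (Real.sqrt_nonneg _)
  have hann : 0 ≤ a := Real.sqrt_nonneg _
  have hbnn : 0 ≤ b := Real.sqrt_nonneg _
  have hnnn : 0 ≤ n := Real.sqrt_nonneg _
  have henn : 0 ≤ e := Real.sqrt_nonneg _
  have haA : a = Real.sqrt A := rfl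
  have hbn : b ≤ n := by
    have hBN : B ≤ N := le_trans (le_add_of_nonneg_left hAnn) step5
    exact Real.sqrt_le_sqrt hBN
  clear_value a b n e s
  -- show LHS² ≤ (n + e/s)²
  have hgoal2 : (1 + K₀ / D₀) * A ≤ (n + 1 / s * e) ^ 2 := by
    have hKAineq : K₀ * A ≤ (s * b + e) ^ 2 := by
      have h1 : Real.sqrt K₀ * a ≤ s * b + e := hchain
      have h2 : (Real.sqrt K₀ * a) ^ 2 ≤ (s * b + e) ^ 2 :=
        pow_le_pow_left₀ haKnn h1 2
      calc K₀ * A = (Real.sqrt K₀ * a) ^ 2 := by rw [mul_pow, hK2, ha2]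
        _ ≤ _ := h2
    have hABn : A + B ≤ n ^ 2 := by rw [hn2]; exact step5
    have key : (1 + K₀ / D₀) * A = A + (K₀ * A) / D₀ := by ring
    rw [key]
    have h3 : A + (K₀ * A) / D₀ ≤ A + (s * b + e) ^ 2 / D₀ := by
      have hdiv := mul_le_mul_of_nonneg_right hKAineq (le_of_lt (one_div_pos.2 hD₀pos))
      have e1 : K₀ * A / D₀ = K₀ * A * (1 / D₀) := by ring
      have e2 : (s * b + e) ^ 2 / D₀ = (s * b + e) ^ 2 * (1 / D₀) := by ring
      linarith [hdiv]
    refine le_trans h3 ?_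
    have hexp : A + (s * b + e) ^ 2 / D₀ = A + (b + e / s) ^ 2 := by
      field_simp
      rw [← hs2]
    rw [hexp]
    have hes : 0 ≤ e / s := div_nonneg henn hs.le
    have h4 : A + b ^ 2 ≤ n ^ 2 := by rw [hb2]; exact hABn
    have h5 : 1 / s * e = e / s := by ring
    rw [h5]
    nlinarith [mul_le_mul_of_nonneg_right hbn hes]
  -- conclude
  have hLHS : Real.sqrt (1 + K₀ / D₀) * a = Real.sqrt ((1 + K₀ / D₀) * A) := by
    rw [haA, Real.sqrt_mul (by positivity)]
  rw [hLHS]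
  calc Real.sqrt ((1 + K₀ / D₀) * A) ≤ Real.sqrt ((n + 1 / s * e) ^ 2) :=
        Real.sqrt_le_sqrt hgoal2
    _ = n + 1 / s * e := Real.sqrt_sq (by positivity)
end

section
/- Key step of the main theorem: Let (S_m)_{m=0,…,n} be a partition of V(G) with K_{m−1} = inf_{v∈S_m} w_{S_{m−1}}(v)/ν(v) > 0 and D_{m−1} = sup_{v∈S_{m−1}} w_{S_m}(v)/ν(v). Then for every f ∈ ℓ^p_ν(G), 1 ≤ p < ∞, and every m ≥ 1: ‖f|_{S_m}‖_{p,ν} ≤ (D_{m−1}/K_{m−1})^{1/p} ‖f|_{S_{m−1}}‖_{p,ν} + φ_{m,p}, where φ_{m,p} = (K_{m−1}^{−1} ∑_{u∈S_m} ∑_{v∈S_{m−1}} |f(u)−f(v)|^p w(u,v))^{1/p}. -/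
open Finset

/-- key step of the main theorem. With `A = S_{m-1}`, `B = S_m`,
`K = K_{m-1}`, `D = D_{m-1}`, for `1 ≤ p < ∞`:
`‖f|_B‖_{p,ν} ≤ (D/K)^{1/p} ‖f|_A‖_{p,ν} + φ_{m,p}`. -/
theorem statement3 {V : Type*} [Fintype V] (w : V → V → ℝ)
    (hsymm : ∀ u v, w u v = w v u) (hdiag : ∀ u, w u u = 0)
    (hnonneg : ∀ u v, 0 ≤ w u v) (ν : V → ℝ) (hν : ∀ v, 0 < ν v)
    (p : ℝ) (hp : 1 ≤ p)
    (A B : Finset V) (hdisj : Disjoint A B)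
    (K D : ℝ) (hKpos : 0 < K)
    (hK : ∀ v ∈ B, K * ν v ≤ ∑ u ∈ A, w u v)
    (hD : ∀ v ∈ A, ∑ u ∈ B, w u v ≤ D * ν v)
    (f : V → ℂ) :
    (∑ v ∈ B, ‖f v‖ ^ p * ν v) ^ (1 / p) ≤
      (D / K) ^ (1 / p) * (∑ v ∈ A, ‖f v‖ ^ p * ν v) ^ (1 / p) +
        (K⁻¹ * ∑ u ∈ B, ∑ v ∈ A, ‖f u - f v‖ ^ p * w u v) ^ (1 / p) := by
  have hppos : 0 < p := lt_of_lt_of_le one_pos hp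
  have hpne : p ≠ 0 := ne_of_gt hppos
  have h1p : 0 ≤ 1 / p := by positivity
  -- Case: A empty
  rcases A.eq_empty_or_nonempty with hA | hA
  · subst hA
    have hBe : B = ∅ := by
      by_contra h
      obtain ⟨v, hv⟩ := Finset.nonempty_iff_ne_empty.2 h
      have := hK v hv
      simp at this
      nlinarith [hν v, mul_pos hKpos (hν v)]
    subst hBe
    simp [Real.zero_rpow (one_div_ne_zero hpne), Real.zero_rpow (inv_ne_zero hpne)]
  -- A nonempty, so D ≥ 0
  have hD0 : 0 ≤ D := by
    obtain ⟨v, hv⟩ := hA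
    have h1 : (0:ℝ) ≤ ∑ u ∈ B, w u v := Finset.sum_nonneg fun u _ => hnonneg u v
    have := hD v hv
    nlinarith [hν v]
  set X := ∑ v ∈ B, ‖f v‖ ^ p * ν v with hXdef
  set Y := ∑ v ∈ A, ‖f v‖ ^ p * ν v with hYdef
  set Z := ∑ u ∈ B, ∑ v ∈ A, ‖f u - f v‖ ^ p * w u v with hZdef
  have hX0 : 0 ≤ X := Finset.sum_nonneg fun v _ =>
    mul_nonneg (Real.rpow_nonneg (norm_nonneg _) _) (hν v).le
  have hY0 : 0 ≤ Y := Finset.sum_nonneg fun v _ =>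
    mul_nonneg (Real.rpow_nonneg (norm_nonneg _) _) (hν v).le
  have hZ0 : 0 ≤ Z := Finset.sum_nonneg fun u _ => Finset.sum_nonneg fun v _ =>
    mul_nonneg (Real.rpow_nonneg (norm_nonneg _) _) (hnonneg u v)
  have hwp : ∀ (u v : V), ((w u v) ^ (1/p)) ^ p = w u v := fun u v => by
    rw [← Real.rpow_mul (hnonneg u v), one_div_mul_cancel hpne, Real.rpow_one]
  -- Step 1: K * X ≤ ∑_{(u,v)∈B×A} |f u|^p * w u v
  have step1 : K * X ≤ ∑ q ∈ B ×ˢ A, ‖f q.1‖ ^ p * w q.1 q.2 := by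
    rw [Finset.sum_product, hXdef, Finset.mul_sum]
    refine Finset.sum_le_sum fun u hu => ?_
    have h1 : K * ν u ≤ ∑ v ∈ A, w v u := hK u hu
    calc K * (‖f u‖ ^ p * ν u) = ‖f u‖ ^ p * (K * ν u) := by ring
      _ ≤ ‖f u‖ ^ p * ∑ v ∈ A, w v u :=
          mul_le_mul_of_nonneg_left h1 (Real.rpow_nonneg (norm_nonneg _) _)
      _ = ∑ v ∈ A, ‖f u‖ ^ p * w u v := by
          rw [Finset.mul_sum]; exact Finset.sum_congr rfl fun v _ => by rw [hsymm]
  -- the two auxiliary functions for Minkowski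
  set a : V × V → ℝ := fun q => ‖f q.2‖ * (w q.1 q.2) ^ (1/p) with hadef
  set b : V × V → ℝ := fun q => ‖f q.1 - f q.2‖ * (w q.1 q.2) ^ (1/p) with hbdef
  have ha0 : ∀ q ∈ B ×ˢ A, 0 ≤ a q := fun q _ =>
    mul_nonneg (norm_nonneg _) (Real.rpow_nonneg (hnonneg _ _) _)
  have hb0 : ∀ q ∈ B ×ˢ A, 0 ≤ b q := fun q _ =>
    mul_nonneg (norm_nonneg _) (Real.rpow_nonneg (hnonneg _ _) _)
  -- pointwise bound
  have step2 : ∀ q ∈ B ×ˢ A, ‖f q.1‖ ^ p * w q.1 q.2 ≤ (a q + b q) ^ p := by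
    intro q _
    have htri : ‖f q.1‖ ≤ ‖f q.2‖ + ‖f q.1 - f q.2‖ := by
      have := norm_add_le (f q.2) (f q.1 - f q.2)
      simpa using this
    have h2 : ‖f q.1‖ * (w q.1 q.2) ^ (1/p) ≤ a q + b q := by
      rw [hadef, hbdef, ← add_mul]
      exact mul_le_mul_of_nonneg_right htri (Real.rpow_nonneg (hnonneg _ _) _)
    calc ‖f q.1‖ ^ p * w q.1 q.2
        = (‖f q.1‖ * (w q.1 q.2) ^ (1/p)) ^ p := by
          rw [Real.mul_rpow (norm_nonneg _) (Real.rpow_nonneg (hnonneg _ _) _), hwp]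
      _ ≤ (a q + b q) ^ p := Real.rpow_le_rpow
          (mul_nonneg (norm_nonneg _) (Real.rpow_nonneg (hnonneg _ _) _)) h2 hppos.le
  -- sums of a^p and b^p
  have hasum : ∑ q ∈ B ×ˢ A, a q ^ p ≤ D * Y := by
    have : ∀ q ∈ B ×ˢ A, a q ^ p = ‖f q.2‖ ^ p * w q.1 q.2 := fun q _ => by
      rw [hadef, Real.mul_rpow (norm_nonneg _) (Real.rpow_nonneg (hnonneg _ _) _), hwp]
    rw [Finset.sum_congr rfl this, Finset.sum_product, Finset.sum_comm, hYdef, Finset.mul_sum]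
    refine Finset.sum_le_sum fun v hv => ?_
    dsimp only
    rw [← Finset.mul_sum]
    calc ‖f v‖ ^ p * ∑ u ∈ B, w u v
        ≤ ‖f v‖ ^ p * (D * ν v) :=
          mul_le_mul_of_nonneg_left (hD v hv) (Real.rpow_nonneg (norm_nonneg _) _)
      _ = D * (‖f v‖ ^ p * ν v) := by ring
  have hbsum : ∑ q ∈ B ×ˢ A, b q ^ p = Z := by
    rw [hZdef, Finset.sum_product]
    refine Finset.sum_congr rfl fun u _ => Finset.sum_congr rfl fun v _ => ?_
    rw [hbdef, Real.mul_rpow (norm_nonneg _) (Real.rpow_nonneg (hnonneg _ _) _), hwp]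
  -- main intermediate inequality
  have main : (K * X) ^ (1/p) ≤ (D * Y) ^ (1/p) + Z ^ (1/p) := by
    have hsab0 : 0 ≤ ∑ q ∈ B ×ˢ A, a q ^ p := Finset.sum_nonneg fun q hq =>
      Real.rpow_nonneg (ha0 q hq) _
    calc (K * X) ^ (1/p)
        ≤ (∑ q ∈ B ×ˢ A, (a q + b q) ^ p) ^ (1/p) := by
          refine Real.rpow_le_rpow (mul_nonneg hKpos.le hX0) ?_ h1p
          exact le_trans step1 (Finset.sum_le_sum step2)
      _ ≤ (∑ q ∈ B ×ˢ A, a q ^ p) ^ (1/p) + (∑ q ∈ B ×ˢ A, b q ^ p) ^ (1/p) :=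
          Real.Lp_add_le_of_nonneg (s := B ×ˢ A) hp ha0 hb0
      _ ≤ (D * Y) ^ (1/p) + Z ^ (1/p) :=
          add_le_add (Real.rpow_le_rpow hsab0 hasum h1p) (le_of_eq (by rw [hbsum]))
  -- conclude
  have hKi : (0:ℝ) ≤ K⁻¹ := by positivity
  have hKip : (0:ℝ) ≤ (K⁻¹) ^ (1/p) := Real.rpow_nonneg hKi _
  calc X ^ (1/p) = (K⁻¹ * (K * X)) ^ (1/p) := by rw [inv_mul_cancel_left₀ hKpos.ne']
    _ = (K⁻¹) ^ (1/p) * (K * X) ^ (1/p) := Real.mul_rpow hKi (mul_nonneg hKpos.le hX0)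
    _ ≤ (K⁻¹) ^ (1/p) * ((D * Y) ^ (1/p) + Z ^ (1/p)) :=
        mul_le_mul_of_nonneg_left main hKip
    _ = (D / K) ^ (1/p) * Y ^ (1/p) + (K⁻¹ * Z) ^ (1/p) := by
        rw [mul_add, ← Real.mul_rpow hKi hZ0, ← Real.mul_rpow hKi (mul_nonneg hD0 hY0),
          show K⁻¹ * (D * Y) = (D / K) * Y by field_simp,
          Real.mul_rpow (div_nonneg hD0 hKpos.le) hY0]
end

section
/- Corollary (Plancherel–Polya lower frame bound): Let X ⊆ ℓ^p_ν(G) be a subspace such that ‖∇_w f‖_p ≤ ε ‖f‖_{p,ν} for all f ∈ X. Let S be an admissible partition with constants a_{S,p} = (∑_{m=0}^{n} ∏_{j=0}^{m−1} D_j/K_j)^{1/p} and δ_{S,p} as in Theorem 1.1. If ε δ_{S,p} < 1, then for all f ∈ X: ((1 − ε δ_{S,p})/a_{S,p}) ‖f‖_{p,ν} ≤ ‖f|_{S₀}‖_{p,ν} ≤ ‖f‖_{p,ν}. -/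
open Finset

/-- Plancherel–Polya lower frame bound (case p = 2), assuming the
Poincaré inequality `‖f‖_{2,ν} ≤ a ‖f|_{S₀}‖_{2,ν} + δ ‖∇_w f‖₂` on the subspace `X`
together with the Bernstein-type bound `‖∇_w f‖₂ ≤ ε ‖f‖_{2,ν}`. -/
theorem statement6 {V : Type*} [Fintype V] (w : V → V → ℝ)
    (hsymm : ∀ u v, w u v = w v u) (hdiag : ∀ u, w u u = 0)
    (hnonneg : ∀ u v, 0 ≤ w u v) (ν : V → ℝ) (hν : ∀ v, 0 < ν v)
    (S₀ : Finset V) (X : Submodule ℂ (V → ℂ))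
    (a δ ε : ℝ) (ha : 0 < a) (hδ : 0 ≤ δ) (hε : 0 ≤ ε) (hεδ : ε * δ < 1)
    (hBern : ∀ f ∈ X,
      Real.sqrt (∑ u, ∑ v, ‖f u - f v‖ ^ 2 * w u v) ≤
        ε * Real.sqrt (∑ v, ‖f v‖ ^ 2 * ν v))
    (hPoincare : ∀ f ∈ X,
      Real.sqrt (∑ v, ‖f v‖ ^ 2 * ν v) ≤
        a * Real.sqrt (∑ v ∈ S₀, ‖f v‖ ^ 2 * ν v) +
          δ * Real.sqrt (∑ u, ∑ v, ‖f u - f v‖ ^ 2 * w u v)) :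
    ∀ f ∈ X,
      ((1 - ε * δ) / a) * Real.sqrt (∑ v, ‖f v‖ ^ 2 * ν v) ≤
          Real.sqrt (∑ v ∈ S₀, ‖f v‖ ^ 2 * ν v) ∧
        Real.sqrt (∑ v ∈ S₀, ‖f v‖ ^ 2 * ν v) ≤
          Real.sqrt (∑ v, ‖f v‖ ^ 2 * ν v) := by
  intro f hf
  set N := Real.sqrt (∑ v, ‖f v‖ ^ 2 * ν v) with hN
  set N0 := Real.sqrt (∑ v ∈ S₀, ‖f v‖ ^ 2 * ν v) with hN0
  have key : N ≤ a * N0 + δ * (ε * N) := by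
    refine (hPoincare f hf).trans ?_
    have := hBern f hf
    nlinarith [this, hδ]
  constructor
  · rw [div_mul_eq_mul_div, div_le_iff₀ ha]
    nlinarith
  · apply Real.sqrt_le_sqrt
    apply Finset.sum_le_sum_of_subset_of_nonneg (Finset.subset_univ S₀)
    intro v _ _
    exact mul_nonneg (sq_nonneg _) (hν v).le
end

section
/- Corollary (Poincaré inequality for functions vanishing on S₀, two-set case, p=2): Let V(G) = S₀ ∪ S₁ be a partition with K₀ = inf_{v∈S₁} w_{S₀}(v)/ν(v) > 0. If f ∈ ℓ²_ν(G) satisfies f|_{S₀} = 0, then ‖f‖_{2,ν} ≤ K₀^{−1/2} ‖∇_w f‖₂. -/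
open Finset

/-- Poincaré inequality for functions vanishing on `S₀`,
two-set partition, p = 2. -/
theorem statement7 {V : Type*} [Fintype V] [DecidableEq V] (w : V → V → ℝ)
    (hsymm : ∀ u v, w u v = w v u) (hdiag : ∀ u, w u u = 0)
    (hnonneg : ∀ u v, 0 ≤ w u v) (ν : V → ℝ) (hν : ∀ v, 0 < ν v)
    (S₀ S₁ : Finset V) (hdisj : Disjoint S₀ S₁) (hcover : S₀ ∪ S₁ = Finset.univ)
    (K₀ : ℝ) (hK₀pos : 0 < K₀)
    (hK₀ : ∀ v ∈ S₁, K₀ * ν v ≤ ∑ u ∈ S₀, w u v)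
    (f : V → ℂ) (hf : ∀ v ∈ S₀, f v = 0) :
    Real.sqrt (∑ v, ‖f v‖ ^ 2 * ν v) ≤
      (1 / Real.sqrt K₀) *
        Real.sqrt (∑ u, ∑ v, ‖f u - f v‖ ^ 2 * w u v) := by
  set A := ∑ v, ‖f v‖ ^ 2 * ν v with hA
  set B := ∑ u, ∑ v, ‖f u - f v‖ ^ 2 * w u v with hB
  have hBnn : 0 ≤ B := Finset.sum_nonneg fun u _ =>
    Finset.sum_nonneg fun v _ => mul_nonneg (sq_nonneg _) (hnonneg u v)
  have key : K₀ * A ≤ B := by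
    have h1 : K₀ * A = ∑ v ∈ S₁, ‖f v‖ ^ 2 * (K₀ * ν v) := by
      rw [hA, Finset.mul_sum, ← hcover, Finset.sum_union hdisj,
        Finset.sum_eq_zero (fun v hv => by simp [hf v hv])]
      rw [zero_add]
      exact Finset.sum_congr rfl fun v _ => by ring
    have h2 : ∑ v ∈ S₁, ‖f v‖ ^ 2 * (K₀ * ν v)
        ≤ ∑ v ∈ S₁, ∑ u ∈ S₀, ‖f u - f v‖ ^ 2 * w u v := by
      apply Finset.sum_le_sum
      intro v hv
      calc ‖f v‖ ^ 2 * (K₀ * ν v)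
          ≤ ‖f v‖ ^ 2 * ∑ u ∈ S₀, w u v :=
            mul_le_mul_of_nonneg_left (hK₀ v hv) (sq_nonneg _)
        _ = ∑ u ∈ S₀, ‖f u - f v‖ ^ 2 * w u v := by
            rw [Finset.mul_sum]
            exact Finset.sum_congr rfl fun u hu => by
              rw [hf u hu, zero_sub, norm_neg]
    have h3 : ∑ v ∈ S₁, ∑ u ∈ S₀, ‖f u - f v‖ ^ 2 * w u v ≤ B := by
      rw [Finset.sum_comm, hB]
      calc ∑ u ∈ S₀, ∑ v ∈ S₁, ‖f u - f v‖ ^ 2 * w u v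
          ≤ ∑ u ∈ S₀, ∑ v, ‖f u - f v‖ ^ 2 * w u v :=
            Finset.sum_le_sum fun u _ =>
              Finset.sum_le_sum_of_subset_of_nonneg (Finset.subset_univ _)
                fun v _ _ => mul_nonneg (sq_nonneg _) (hnonneg u v)
        _ ≤ ∑ u, ∑ v, ‖f u - f v‖ ^ 2 * w u v :=
            Finset.sum_le_sum_of_subset_of_nonneg (Finset.subset_univ _)
              fun u _ _ => Finset.sum_nonneg fun v _ =>
                mul_nonneg (sq_nonneg _) (hnonneg u v)
    exact (h1 ▸ h2).trans h3
  have hAB : A ≤ B / K₀ := (le_div_iff₀' hK₀pos).2 key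
  calc Real.sqrt A ≤ Real.sqrt (B / K₀) := Real.sqrt_le_sqrt hAB
    _ = Real.sqrt B / Real.sqrt K₀ := Real.sqrt_div hBnn K₀
    _ = (1 / Real.sqrt K₀) * Real.sqrt B := by ring
end

section
/- Corollary (Poincaré inequality for functions supported on S₀, two-set case, p=2): Let S₀, S₁ ⊆ V(G) be disjoint, with K̂₀ = inf_{v∈S₀} w_{S₁}(v)/ν(v) > 0 and D̂₀ = sup_{v∈S₁} w_{S₀}(v)/ν(v) > 0, and suppose K̂₀/D̂₀ > 0. If f ∈ ℓ²_ν(G) vanishes outside S₀, then ‖f‖_{2,ν} ≤ (D̂₀^{−1/2} / ((1 + K̂₀/D̂₀)^{1/2} − 1)) ‖∇_w f‖₂. -/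
open Finset

/-- Poincaré inequality for functions supported on `S₀`,
two-set case, p = 2. -/
theorem statement8 {V : Type*} [Fintype V] (w : V → V → ℝ)
    (hsymm : ∀ u v, w u v = w v u) (hdiag : ∀ u, w u u = 0)
    (hnonneg : ∀ u v, 0 ≤ w u v) (ν : V → ℝ) (hν : ∀ v, 0 < ν v)
    (S₀ S₁ : Finset V) (hdisj : Disjoint S₀ S₁)
    (K₀ D₀ : ℝ) (hK₀pos : 0 < K₀) (hD₀pos : 0 < D₀)
    (hK₀ : ∀ v ∈ S₀, K₀ * ν v ≤ ∑ u ∈ S₁, w u v)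
    (hD₀ : ∀ v ∈ S₁, ∑ u ∈ S₀, w u v ≤ D₀ * ν v)
    (f : V → ℂ) (hf : ∀ v, v ∉ S₀ → f v = 0) :
    Real.sqrt (∑ v, ‖f v‖ ^ 2 * ν v) ≤
      ((1 / Real.sqrt D₀) / (Real.sqrt (1 + K₀ / D₀) - 1)) *
        Real.sqrt (∑ u, ∑ v, ‖f u - f v‖ ^ 2 * w u v) := by
  set A := ∑ v, ‖f v‖ ^ 2 * ν v with hAdef
  set E := ∑ u, ∑ v, ‖f u - f v‖ ^ 2 * w u v with hEdef
  have hA0 : 0 ≤ A := Finset.sum_nonneg fun v _ =>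
    mul_nonneg (sq_nonneg _) (hν v).le
  have hE0 : 0 ≤ E := Finset.sum_nonneg fun u _ => Finset.sum_nonneg fun v _ =>
    mul_nonneg (sq_nonneg _) (hnonneg u v)
  -- key estimate: K₀ * A ≤ E
  have hAeq : A = ∑ v ∈ S₀, ‖f v‖ ^ 2 * ν v := by
    rw [hAdef, ← Finset.sum_subset (Finset.subset_univ S₀)]
    intro v _ hv
    rw [hf v hv]
    simp
  have h1 : K₀ * A ≤ ∑ u ∈ S₁, ∑ v ∈ S₀, ‖f u - f v‖ ^ 2 * w u v := by
    rw [Finset.sum_comm, hAeq, Finset.mul_sum]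
    apply Finset.sum_le_sum
    intro v hv
    calc K₀ * (‖f v‖ ^ 2 * ν v)
        = ‖f v‖ ^ 2 * (K₀ * ν v) := by ring
      _ ≤ ‖f v‖ ^ 2 * ∑ u ∈ S₁, w u v :=
          mul_le_mul_of_nonneg_left (hK₀ v hv) (sq_nonneg _)
      _ = ∑ u ∈ S₁, ‖f u - f v‖ ^ 2 * w u v := by
          rw [Finset.mul_sum]
          apply Finset.sum_congr rfl
          intro u hu
          have hfu : f u = 0 := hf u (Finset.disjoint_right.mp hdisj hu)
          rw [hfu, zero_sub, norm_neg]
  have h2 : ∑ u ∈ S₁, ∑ v ∈ S₀, ‖f u - f v‖ ^ 2 * w u v ≤ E := by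
    rw [hEdef]
    calc ∑ u ∈ S₁, ∑ v ∈ S₀, ‖f u - f v‖ ^ 2 * w u v
        ≤ ∑ u ∈ S₁, ∑ v, ‖f u - f v‖ ^ 2 * w u v := by
          apply Finset.sum_le_sum
          intro u _
          apply Finset.sum_le_sum_of_subset_of_nonneg (Finset.subset_univ S₀)
          intro v _ _
          exact mul_nonneg (sq_nonneg _) (hnonneg u v)
      _ ≤ ∑ u, ∑ v, ‖f u - f v‖ ^ 2 * w u v := by
          apply Finset.sum_le_sum_of_subset_of_nonneg (Finset.subset_univ S₁)
          intro u _ _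
          exact Finset.sum_nonneg fun v _ => mul_nonneg (sq_nonneg _) (hnonneg u v)
  have hkey : K₀ * A ≤ E := h1.trans h2
  -- constants
  have hsD : 0 < Real.sqrt D₀ := Real.sqrt_pos.mpr hD₀pos
  have hsK : 0 < Real.sqrt K₀ := Real.sqrt_pos.mpr hK₀pos
  have hs1 : (1 : ℝ) < Real.sqrt (1 + K₀ / D₀) := by
    have hq : 0 < K₀ / D₀ := div_pos hK₀pos hD₀pos
    have := (Real.lt_sqrt (by norm_num : (0:ℝ) ≤ 1)).mpr
      (by nlinarith : (1:ℝ) ^ 2 < 1 + K₀ / D₀)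
    exact this
  set d := Real.sqrt (1 + K₀ / D₀) - 1 with hddef
  have hd0 : 0 < d := by simp [hddef]; linarith
  -- √D₀ * d ≤ √K₀
  have hdsq : d ^ 2 ≤ K₀ / D₀ := by
    have hsq : Real.sqrt (1 + K₀ / D₀) ^ 2 = 1 + K₀ / D₀ := by
      rw [Real.sq_sqrt]
      have : 0 < K₀ / D₀ := div_pos hK₀pos hD₀pos
      linarith
    nlinarith [hs1]
  have hDdK : Real.sqrt D₀ * d ≤ Real.sqrt K₀ := by
    have h3 : (Real.sqrt D₀ * d) ^ 2 ≤ K₀ := by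
      have : Real.sqrt D₀ ^ 2 = D₀ := Real.sq_sqrt hD₀pos.le
      calc (Real.sqrt D₀ * d) ^ 2 = Real.sqrt D₀ ^ 2 * d ^ 2 := by ring
        _ = D₀ * d ^ 2 := by rw [this]
        _ ≤ D₀ * (K₀ / D₀) := mul_le_mul_of_nonneg_left hdsq hD₀pos.le
        _ = K₀ := by field_simp
    calc Real.sqrt D₀ * d = Real.sqrt ((Real.sqrt D₀ * d) ^ 2) := by
          rw [Real.sqrt_sq (mul_nonneg hsD.le hd0.le)]
      _ ≤ Real.sqrt K₀ := Real.sqrt_le_sqrt h3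
  -- conclude
  have hAle : A ≤ E / K₀ := by
    rw [le_div_iff₀ hK₀pos]
    linarith [hkey, mul_comm A K₀]
  calc Real.sqrt A ≤ Real.sqrt (E / K₀) := Real.sqrt_le_sqrt hAle
    _ = Real.sqrt E / Real.sqrt K₀ := Real.sqrt_div hE0 K₀
    _ = (1 / Real.sqrt K₀) * Real.sqrt E := by ring
    _ ≤ ((1 / Real.sqrt D₀) / d) * Real.sqrt E := by
        apply mul_le_mul_of_nonneg_right _ (Real.sqrt_nonneg E)
        rw [div_div]
        exact one_div_le_one_div_of_le (by positivity) hDdK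
end

section
/- Sampling estimate for Paley–Wiener functions (two-set partition): Let V(G) = S₀ ∪ S₁ (disjoint) with K₀ = inf_{v∈S₁} w_{S₀}(v) > 0 and D₀ = sup_{v∈S₀} w_{S₁}(v) < ∞. If 0 < ω < K₀/2, then for every f ∈ PW_ω(L_w): ‖f‖₂ ≤ (1 − √(2ω/K₀))^{−1} (1 + D₀/K₀)^{1/2} ‖f|_{S₀}‖₂. In particular S₀ is a uniqueness set for PW_ω(L_w). -/
open Finset

namespace S10

variable {V : Type*} [Fintype V]

noncomputable def lap (w : V → V → ℝ) (f : V → ℂ) : V → ℂ :=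
  fun v => ∑ u, (f v - f u) * (w v u : ℂ)

noncomputable def inn (f g : V → ℂ) : ℂ := ∑ v, (starRingEnd ℂ) (f v) * g v

lemma inn_self (f : V → ℂ) : inn f f = ((∑ v, ‖f v‖ ^ 2 : ℝ) : ℂ) := by
  unfold inn
  push_cast
  refine Finset.sum_congr rfl fun v _ => ?_
  rw [mul_comm, Complex.mul_conj]
  norm_cast
  rw [Complex.sq_norm]

lemma lap_sum {ι : Type*} (w : V → V → ℝ) (s : Finset ι) (g : ι → V → ℂ) :
    lap w (fun v => ∑ i ∈ s, g i v) = fun v => ∑ i ∈ s, lap w (g i) v := by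
  funext v
  unfold lap
  rw [Finset.sum_comm]
  refine Finset.sum_congr rfl fun u _ => ?_
  rw [← Finset.sum_sub_distrib, Finset.sum_mul]

lemma inn_lap_symm (w : V → V → ℝ) (hsymm : ∀ u v, w u v = w v u) (f g : V → ℂ) :
    inn (lap w f) g = inn f (lap w g) := by
  have e1 : inn (lap w f) g
      = ∑ v, ∑ u, (w v u : ℂ) * ((starRingEnd ℂ) (f v) - (starRingEnd ℂ) (f u)) * g v := by
    unfold inn lap
    refine Finset.sum_congr rfl fun v _ => ?_
    rw [map_sum, Finset.sum_mul]
    refine Finset.sum_congr rfl fun u _ => ?_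
    rw [map_mul, map_sub]
    rw [Complex.conj_ofReal]
    ring
  have e2 : inn f (lap w g)
      = ∑ v, ∑ u, (w v u : ℂ) * (starRingEnd ℂ) (f v) * (g v - g u) := by
    unfold inn lap
    refine Finset.sum_congr rfl fun v _ => ?_
    rw [Finset.mul_sum]
    refine Finset.sum_congr rfl fun u _ => ?_
    ring
  have hD : (∑ v, ∑ u, (w v u : ℂ) * ((starRingEnd ℂ) (f v) * g u - (starRingEnd ℂ) (f u) * g v))
      = 0 := by
    set D := ∑ v, ∑ u, (w v u : ℂ) * ((starRingEnd ℂ) (f v) * g u - (starRingEnd ℂ) (f u) * g v)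
      with hDdef
    have h : D = -D := by
      conv_lhs => rw [hDdef, Finset.sum_comm]
      rw [← Finset.sum_neg_distrib]
      refine Finset.sum_congr rfl fun v _ => ?_
      rw [← Finset.sum_neg_distrib]
      refine Finset.sum_congr rfl fun u _ => ?_
      rw [hsymm u v]
      ring
    linear_combination h / 2
  rw [e1, e2, ← sub_eq_zero, ← hD, ← Finset.sum_sub_distrib]
  refine Finset.sum_congr rfl fun v _ => ?_
  rw [← Finset.sum_sub_distrib]
  refine Finset.sum_congr rfl fun u _ => ?_
  ring


/-- Eigenspace of the Laplacian as a submodule. -/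
noncomputable def eig (w : V → V → ℝ) (μ : ℝ) : Submodule ℂ (V → ℂ) where
  carrier := {g | ∀ v, (∑ u, (g v - g u) * (w v u : ℂ)) = (μ : ℂ) * g v}
  add_mem' := by
    intro a b ha hb v
    simp only [Pi.add_apply]
    have : ∀ u, (a v + b v - (a u + b u)) * (w v u : ℂ)
        = (a v - a u) * (w v u : ℂ) + (b v - b u) * (w v u : ℂ) := fun u => by ring
    rw [Finset.sum_congr rfl (fun u _ => this u), Finset.sum_add_distrib, ha v, hb v]
    ring
  zero_mem' := by intro v; simp
  smul_mem' := by
    intro c a ha v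
    simp only [Pi.smul_apply, smul_eq_mul]
    have : ∀ u, (c * a v - c * a u) * (w v u : ℂ) = c * ((a v - a u) * (w v u : ℂ)) :=
      fun u => by ring
    rw [Finset.sum_congr rfl (fun u _ => this u), ← Finset.mul_sum, ha v]
    ring

lemma lap_of_eig {w : V → V → ℝ} {μ : ℝ} {g : V → ℂ} (hg : g ∈ eig w μ) :
    lap w g = fun v => (μ : ℂ) * g v := funext fun v => hg v

lemma inn_ortho (w : V → V → ℝ) (hsymm : ∀ u v, w u v = w v u) {μ ν : ℝ} (hμν : μ ≠ ν)
    {g h : V → ℂ} (hg : g ∈ eig w μ) (hh : h ∈ eig w ν) : inn g h = 0 := by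
  have h1 : inn (lap w g) h = (μ : ℂ) * inn g h := by
    rw [lap_of_eig hg]
    unfold inn
    rw [Finset.mul_sum]
    refine Finset.sum_congr rfl fun v _ => ?_
    rw [map_mul, Complex.conj_ofReal]
    ring
  have h2 : inn g (lap w h) = (ν : ℂ) * inn g h := by
    rw [lap_of_eig hh]
    unfold inn
    rw [Finset.mul_sum]
    refine Finset.sum_congr rfl fun v _ => ?_
    ring
  have h3 := inn_lap_symm w hsymm g h
  rw [h1, h2] at h3
  have hcast : (μ : ℂ) ≠ (ν : ℂ) := by exact_mod_cast hμν
  have hz : ((μ : ℂ) - ν) * inn g h = 0 := by linear_combination h3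
  rcases mul_eq_zero.mp hz with h' | h'
  · exact absurd (sub_eq_zero.mp h') hcast
  · exact h'


lemma inn_sum_sum {ι : Type*} (s : Finset ι) (g h : ι → V → ℂ) :
    inn (fun v => ∑ i ∈ s, g i v) (fun v => ∑ j ∈ s, h j v)
      = ∑ i ∈ s, ∑ j ∈ s, inn (g i) (h j) := by
  unfold inn
  have e : ∀ v : V, (starRingEnd ℂ) (∑ i ∈ s, g i v) * (∑ j ∈ s, h j v)
      = ∑ i ∈ s, ∑ j ∈ s, (starRingEnd ℂ) (g i v) * h j v := by
    intro v
    rw [map_sum, Finset.sum_mul]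
    exact Finset.sum_congr rfl fun i _ => by rw [Finset.mul_sum]
  rw [Finset.sum_congr rfl fun v _ => e v, Finset.sum_comm]
  exact Finset.sum_congr rfl fun i _ => Finset.sum_comm

lemma spectral_bound (w : V → V → ℝ) (hsymm : ∀ u v, w u v = w v u) {ω : ℝ} {f : V → ℂ}
    (hf : f ∈ Submodule.span ℂ {g : V → ℂ | ∃ μ : ℝ, 0 ≤ μ ∧ μ ≤ ω ∧
      ∀ v, (∑ u, (g v - g u) * (w v u : ℂ)) = (μ : ℂ) * g v}) :
    (inn f (lap w f)).re ≤ ω * (∑ v, ‖f v‖ ^ 2) := by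
  have hle : Submodule.span ℂ {g : V → ℂ | ∃ μ : ℝ, 0 ≤ μ ∧ μ ≤ ω ∧
      ∀ v, (∑ u, (g v - g u) * (w v u : ℂ)) = (μ : ℂ) * g v}
      ≤ ⨆ (i : Set.Icc (0:ℝ) ω), eig w (i : ℝ) := by
    rw [Submodule.span_le]
    rintro g ⟨μ, h0, h1, heig⟩
    exact Submodule.mem_iSup_of_mem (⟨μ, h0, h1⟩ : Set.Icc (0:ℝ) ω) heig
  have hf' := hle hf
  rw [Submodule.mem_iSup_iff_exists_finsupp] at hf'
  obtain ⟨c, hc, hsum⟩ := hf'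
  have hfeq : f = fun v => ∑ i ∈ c.support, c i v := by
    funext v
    rw [← hsum, Finsupp.sum, Finset.sum_apply]
  set t := c.support with ht
  -- lap of f
  have hlapf : lap w f = fun v => ∑ i ∈ t, ((i : ℝ) : ℂ) * c i v := by
    rw [hfeq, lap_sum]
    funext v
    exact Finset.sum_congr rfl fun i _ => by rw [lap_of_eig (hc i)]
  have hexp : inn f (lap w f) = ∑ i ∈ t, ∑ j ∈ t, inn (c i) (fun v => ((j : ℝ) : ℂ) * c j v) := by
    conv_lhs => rw [hlapf, hfeq]
    exact inn_sum_sum t _ _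
  have hterm : ∀ i ∈ t, ∀ j ∈ t, inn (c i) (fun v => ((j : ℝ) : ℂ) * c j v)
      = ((j : ℝ) : ℂ) * inn (c i) (c j) := by
    intro i _ j _
    unfold inn
    rw [Finset.mul_sum]
    exact Finset.sum_congr rfl fun v _ => by ring
  have hdiag : inn f (lap w f) = ∑ i ∈ t, ((i : ℝ) : ℂ) * inn (c i) (c i) := by
    rw [hexp]
    refine Finset.sum_congr rfl fun i hi => ?_
    rw [Finset.sum_congr rfl fun j hj => hterm i hi j hj]
    refine Finset.sum_eq_single_of_mem i hi fun j _ hji => ?_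
    rw [inn_ortho w hsymm (fun h => hji (Subtype.ext h).symm) (hc i) (hc j), mul_zero]
  have hnorm : inn f f = ∑ i ∈ t, inn (c i) (c i) := by
    conv_lhs => rw [hfeq]
    rw [inn_sum_sum t]
    refine Finset.sum_congr rfl fun i hi => ?_
    refine Finset.sum_eq_single_of_mem i hi fun j _ hji => ?_
    exact inn_ortho w hsymm (fun h => hji (Subtype.ext h).symm) (hc i) (hc j)
  have hNf : (∑ v, ‖f v‖ ^ 2) = ∑ i ∈ t, (∑ v, ‖c i v‖ ^ 2) := by
    have h1 := inn_self f
    rw [hnorm] at h1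
    have h2 : ∑ i ∈ t, inn (c i) (c i)
        = ((∑ i ∈ t, ∑ v, ‖c i v‖ ^ 2 : ℝ) : ℂ) := by
      rw [Complex.ofReal_sum]
      exact Finset.sum_congr rfl fun i _ => inn_self (c i)
    rw [h2] at h1
    exact_mod_cast h1.symm
  have hre : (inn f (lap w f)).re = ∑ i ∈ t, (i : ℝ) * (∑ v, ‖c i v‖ ^ 2) := by
    rw [hdiag, Complex.re_sum]
    refine Finset.sum_congr rfl fun i _ => ?_
    rw [inn_self (c i), ← Complex.ofReal_mul, Complex.ofReal_re]
  rw [hre, hNf, Finset.mul_sum]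
  refine Finset.sum_le_sum fun i _ => ?_
  refine mul_le_mul_of_nonneg_right i.2.2 ?_
  exact Finset.sum_nonneg fun v _ => by positivity

lemma dirichlet_eq (w : V → V → ℝ) (hsymm : ∀ u v, w u v = w v u) (f : V → ℂ) :
    ∑ u, ∑ v, w u v * ‖f u - f v‖ ^ 2 = 2 * (inn f (lap w f)).re := by
  have key : ∀ a b : ℂ, ((starRingEnd ℂ) a * (a - b)).re + ((starRingEnd ℂ) b * (b - a)).re
      = ‖a - b‖ ^ 2 := by
    intro a b
    have h' : (starRingEnd ℂ) a * (a - b) + (starRingEnd ℂ) b * (b - a)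
        = (a - b) * (starRingEnd ℂ) (a - b) := by
      rw [map_sub]
      ring
    rw [← Complex.add_re, h', Complex.mul_conj]
    rw [Complex.ofReal_re, Complex.sq_norm]
  have hS : (inn f (lap w f)).re = ∑ v, ∑ u, w v u * ((starRingEnd ℂ) (f v) * (f v - f u)).re := by
    unfold inn lap
    rw [Complex.re_sum]
    refine Finset.sum_congr rfl fun v _ => ?_
    rw [Finset.mul_sum, Complex.re_sum]
    refine Finset.sum_congr rfl fun u _ => ?_
    rw [show (starRingEnd ℂ) (f v) * ((f v - f u) * (w v u : ℂ))
        = (w v u : ℂ) * ((starRingEnd ℂ) (f v) * (f v - f u)) by ring]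
    rw [Complex.re_ofReal_mul]
  rw [hS]
  have hswap : ∑ v, ∑ u, w v u * ((starRingEnd ℂ) (f v) * (f v - f u)).re
      = ∑ v, ∑ u, w v u * ((starRingEnd ℂ) (f u) * (f u - f v)).re := by
    rw [Finset.sum_comm]
    refine Finset.sum_congr rfl fun v _ => Finset.sum_congr rfl fun u _ => by rw [hsymm u v]
  rw [two_mul]
  nth_rewrite 2 [hswap]
  rw [← Finset.sum_add_distrib]
  refine Finset.sum_congr rfl fun x _ => ?_
  rw [← Finset.sum_add_distrib]
  refine Finset.sum_congr rfl fun y _ => ?_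
  rw [← mul_add, key (f x) (f y)]


lemma dirichlet_le (w : V → V → ℝ) (hsymm : ∀ u v, w u v = w v u) {ω : ℝ} {f : V → ℂ}
    (hf : f ∈ Submodule.span ℂ {g : V → ℂ | ∃ μ : ℝ, 0 ≤ μ ∧ μ ≤ ω ∧
      ∀ v, (∑ u, (g v - g u) * (w v u : ℂ)) = (μ : ℂ) * g v}) :
    ∑ u, ∑ v, w u v * ‖f u - f v‖ ^ 2 ≤ 2 * ω * ∑ v, ‖f v‖ ^ 2 := by
  rw [dirichlet_eq w hsymm f]
  have := spectral_bound w hsymm hf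
  linarith

lemma sqrt_tri {ι : Type*} (s : Finset ι) (a x y z : ι → ℝ) (ha : ∀ i ∈ s, 0 ≤ a i)
    (hx : ∀ i ∈ s, 0 ≤ x i) (hy : ∀ i ∈ s, 0 ≤ y i) (hz : ∀ i ∈ s, 0 ≤ z i)
    (hxyz : ∀ i ∈ s, x i ≤ y i + z i) :
    Real.sqrt (∑ i ∈ s, a i * x i ^ 2)
      ≤ Real.sqrt (∑ i ∈ s, a i * y i ^ 2) + Real.sqrt (∑ i ∈ s, a i * z i ^ 2) := by
  set Y := ∑ i ∈ s, a i * y i ^ 2 with hY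
  set Z := ∑ i ∈ s, a i * z i ^ 2 with hZ
  have hYnn : 0 ≤ Y := Finset.sum_nonneg fun i hi => mul_nonneg (ha i hi) (sq_nonneg _)
  have hZnn : 0 ≤ Z := Finset.sum_nonneg fun i hi => mul_nonneg (ha i hi) (sq_nonneg _)
  have hCS : ∑ i ∈ s, a i * (y i * z i) ≤ Real.sqrt Y * Real.sqrt Z := by
    have h := Finset.sum_mul_sq_le_sq_mul_sq s (fun i => Real.sqrt (a i) * y i)
      (fun i => Real.sqrt (a i) * z i)
    have e1 : ∑ i ∈ s, (Real.sqrt (a i) * y i) * (Real.sqrt (a i) * z i)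
        = ∑ i ∈ s, a i * (y i * z i) := by
      refine Finset.sum_congr rfl fun i hi => ?_
      rw [show (Real.sqrt (a i) * y i) * (Real.sqrt (a i) * z i)
          = (Real.sqrt (a i) * Real.sqrt (a i)) * (y i * z i) by ring,
        Real.mul_self_sqrt (ha i hi)]
    have e2 : ∑ i ∈ s, (Real.sqrt (a i) * y i) ^ 2 = Y := by
      refine Finset.sum_congr rfl fun i hi => ?_
      rw [mul_pow, Real.sq_sqrt (ha i hi)]
    have e3 : ∑ i ∈ s, (Real.sqrt (a i) * z i) ^ 2 = Z := by
      refine Finset.sum_congr rfl fun i hi => ?_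
      rw [mul_pow, Real.sq_sqrt (ha i hi)]
    rw [e1, e2, e3] at h
    have hnn : 0 ≤ ∑ i ∈ s, a i * (y i * z i) :=
      Finset.sum_nonneg fun i hi => mul_nonneg (ha i hi) (mul_nonneg (hy i hi) (hz i hi))
    have := Real.le_sqrt hnn (mul_nonneg hYnn hZnn) |>.mpr h
    rwa [Real.sqrt_mul hYnn] at this
  have main : ∑ i ∈ s, a i * x i ^ 2 ≤ (Real.sqrt Y + Real.sqrt Z) ^ 2 := by
    have step1 : ∑ i ∈ s, a i * x i ^ 2 ≤ ∑ i ∈ s, a i * (y i + z i) ^ 2 := by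
      refine Finset.sum_le_sum fun i hi => ?_
      exact mul_le_mul_of_nonneg_left (pow_le_pow_left₀ (hx i hi) (hxyz i hi) 2) (ha i hi)
    have step2 : ∑ i ∈ s, a i * (y i + z i) ^ 2
        = Y + Z + 2 * ∑ i ∈ s, a i * (y i * z i) := by
      rw [hY, hZ, Finset.mul_sum, ← Finset.sum_add_distrib, ← Finset.sum_add_distrib]
      exact Finset.sum_congr rfl fun i _ => by ring
    have step3 : (Real.sqrt Y + Real.sqrt Z) ^ 2
        = Y + Z + 2 * (Real.sqrt Y * Real.sqrt Z) := by
      have := Real.sq_sqrt hYnn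
      have := Real.sq_sqrt hZnn
      nlinarith [Real.sq_sqrt hYnn, Real.sq_sqrt hZnn]
    rw [step2] at step1
    rw [step3]
    linarith
  calc Real.sqrt (∑ i ∈ s, a i * x i ^ 2) ≤ Real.sqrt ((Real.sqrt Y + Real.sqrt Z) ^ 2) :=
        Real.sqrt_le_sqrt main
    _ = Real.sqrt Y + Real.sqrt Z :=
        Real.sqrt_sq (add_nonneg (Real.sqrt_nonneg _) (Real.sqrt_nonneg _))

lemma sqrt_add_sq_le (x y z : ℝ) (hy : 0 ≤ y) (hz : 0 ≤ z) :
    Real.sqrt (x ^ 2 + (y + z) ^ 2) ≤ Real.sqrt (x ^ 2 + y ^ 2) + z := by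
  have h1 : y ≤ Real.sqrt (x ^ 2 + y ^ 2) := by
    rw [Real.le_sqrt hy (by positivity)]
    nlinarith [sq_nonneg x]
  have h : x ^ 2 + (y + z) ^ 2 ≤ (Real.sqrt (x ^ 2 + y ^ 2) + z) ^ 2 := by
    have h2 := Real.sq_sqrt (show (0:ℝ) ≤ x ^ 2 + y ^ 2 by positivity)
    nlinarith [mul_le_mul_of_nonneg_right h1 hz]
  calc Real.sqrt (x ^ 2 + (y + z) ^ 2)
      ≤ Real.sqrt ((Real.sqrt (x ^ 2 + y ^ 2) + z) ^ 2) := Real.sqrt_le_sqrt h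
    _ = Real.sqrt (x ^ 2 + y ^ 2) + z :=
        Real.sqrt_sq (add_nonneg (Real.sqrt_nonneg _) hz)

end S10

/-- sampling estimate for Paley–Wiener functions, two-set partition,
ν ≡ 1. `PW_ω(L_w)` is formalized as the span of eigenfunctions of the Laplacian with
eigenvalue in `[0, ω]`. If `0 < ω < K₀/2`, then
`‖f‖₂ ≤ (1 − √(2ω/K₀))⁻¹ (1 + D₀/K₀)^{1/2} ‖f|_{S₀}‖₂`. -/
theorem statement10 {V : Type*} [Fintype V] [DecidableEq V] (w : V → V → ℝ)
    (hsymm : ∀ u v, w u v = w v u) (hdiag : ∀ u, w u u = 0)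
    (hnonneg : ∀ u v, 0 ≤ w u v)
    (S₀ S₁ : Finset V) (hdisj : Disjoint S₀ S₁) (hcover : S₀ ∪ S₁ = Finset.univ)
    (K₀ D₀ : ℝ) (hK₀pos : 0 < K₀)
    (hK₀ : ∀ v ∈ S₁, K₀ ≤ ∑ u ∈ S₀, w u v)
    (hD₀ : ∀ v ∈ S₀, ∑ u ∈ S₁, w u v ≤ D₀)
    (ω : ℝ) (hωpos : 0 < ω) (hω : ω < K₀ / 2) (f : V → ℂ)
    (hf : f ∈ Submodule.span ℂ {g : V → ℂ | ∃ μ : ℝ, 0 ≤ μ ∧ μ ≤ ω ∧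
      ∀ v, (∑ u, (g v - g u) * (w v u : ℂ)) = (μ : ℂ) * g v}) :
    Real.sqrt (∑ v, ‖f v‖ ^ 2) ≤
      (1 - Real.sqrt (2 * ω / K₀))⁻¹ * Real.sqrt (1 + D₀ / K₀) *
        Real.sqrt (∑ v ∈ S₀, ‖f v‖ ^ 2) := by
  classical
  have Hdir := S10.dirichlet_le w hsymm hf
  have hα1 : Real.sqrt (2 * ω / K₀) < 1 := by
    rw [show (1:ℝ) = Real.sqrt 1 by simp]
    exact Real.sqrt_lt_sqrt (by positivity) (by rw [div_lt_one hK₀pos]; linarith)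
  set α := Real.sqrt (2 * ω / K₀) with hα
  have hαnn : 0 ≤ α := Real.sqrt_nonneg _
  have h1α : 0 < 1 - α := by linarith
  set A2 := ∑ v ∈ S₀, ‖f v‖ ^ 2 with hA2def
  set B2 := ∑ v ∈ S₁, ‖f v‖ ^ 2 with hB2def
  set N2 := ∑ v, ‖f v‖ ^ 2 with hN2def
  have hA2nn : 0 ≤ A2 := Finset.sum_nonneg fun v _ => by positivity
  have hB2nn : 0 ≤ B2 := Finset.sum_nonneg fun v _ => by positivity
  have hN2nn : 0 ≤ N2 := Finset.sum_nonneg fun v _ => by positivity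
  have hN2 : N2 = A2 + B2 := by
    rw [hN2def, ← hcover, Finset.sum_union hdisj]
  set A := Real.sqrt A2 with hAdef
  set B := Real.sqrt B2 with hBdef
  set N := Real.sqrt N2 with hNdef
  have hAnn : 0 ≤ A := Real.sqrt_nonneg _
  have hBnn : 0 ≤ B := Real.sqrt_nonneg _
  have hNnn : 0 ≤ N := Real.sqrt_nonneg _
  have hA2A : A ^ 2 = A2 := Real.sq_sqrt hA2nn
  have hB2B : B ^ 2 = B2 := Real.sq_sqrt hB2nn
  have hN2N : N ^ 2 = N2 := Real.sq_sqrt hN2nn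
  by_cases hS0 : S₀ = ∅
  · -- degenerate case: V is empty
    have huniv : (Finset.univ : Finset V) = ∅ := by
      by_contra h
      obtain ⟨v, hv⟩ := Finset.nonempty_of_ne_empty h
      have hv1 : v ∈ S₁ := by
        have : v ∈ S₀ ∪ S₁ := by rw [hcover]; exact Finset.mem_univ v
        rcases Finset.mem_union.mp this with h' | h'
        · rw [hS0] at h'; exact absurd h' (Finset.notMem_empty v)
        · exact h'
      have := hK₀ v hv1
      rw [hS0, Finset.sum_empty] at this
      linarith
    have hN20 : N2 = 0 := by rw [hN2def, huniv, Finset.sum_empty]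
    have hN0 : N = 0 := by rw [hNdef, hN20, Real.sqrt_zero]
    rw [hN0]
    exact mul_nonneg (mul_nonneg (inv_nonneg.mpr h1α.le) (Real.sqrt_nonneg _))
      (Real.sqrt_nonneg _)
  -- main case
  obtain ⟨v₀, hv₀⟩ := Finset.nonempty_of_ne_empty hS0
  have hD0nn : 0 ≤ D₀ :=
    le_trans (Finset.sum_nonneg fun u _ => hnonneg u v₀) (hD₀ v₀ hv₀)
  set P := ∑ v ∈ S₁, ∑ u ∈ S₀, w u v * ‖f v‖ ^ 2 with hPdef
  set Q := ∑ v ∈ S₁, ∑ u ∈ S₀, w u v * ‖f u‖ ^ 2 with hQdef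
  set R := ∑ v ∈ S₁, ∑ u ∈ S₀, w u v * ‖f v - f u‖ ^ 2 with hRdef
  have hPnn : 0 ≤ P := Finset.sum_nonneg fun v _ => Finset.sum_nonneg fun u _ =>
    mul_nonneg (hnonneg u v) (by positivity)
  have hQnn : 0 ≤ Q := Finset.sum_nonneg fun v _ => Finset.sum_nonneg fun u _ =>
    mul_nonneg (hnonneg u v) (by positivity)
  have hRnn : 0 ≤ R := Finset.sum_nonneg fun v _ => Finset.sum_nonneg fun u _ =>
    mul_nonneg (hnonneg u v) (by positivity)
  have h1 : K₀ * B2 ≤ P := by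
    rw [hB2def, Finset.mul_sum, hPdef]
    refine Finset.sum_le_sum fun v hv => ?_
    rw [← Finset.sum_mul]
    exact mul_le_mul_of_nonneg_right (hK₀ v hv) (by positivity)
  have h2 : Real.sqrt P ≤ Real.sqrt Q + Real.sqrt R := by
    have hP' : P = ∑ p ∈ S₁ ×ˢ S₀, w p.2 p.1 * ‖f p.1‖ ^ 2 := by
      rw [Finset.sum_product]
    have hQ' : Q = ∑ p ∈ S₁ ×ˢ S₀, w p.2 p.1 * ‖f p.2‖ ^ 2 := by
      rw [Finset.sum_product]
    have hR' : R = ∑ p ∈ S₁ ×ˢ S₀, w p.2 p.1 * ‖f p.1 - f p.2‖ ^ 2 := by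
      rw [Finset.sum_product]
    rw [hP', hQ', hR']
    refine S10.sqrt_tri (S₁ ×ˢ S₀) (fun p => w p.2 p.1) (fun p => ‖f p.1‖)
      (fun p => ‖f p.2‖) (fun p => ‖f p.1 - f p.2‖)
      (fun p _ => hnonneg _ _) (fun p _ => norm_nonneg _)
      (fun p _ => norm_nonneg _) (fun p _ => norm_nonneg _)
      (fun p _ => ?_)
    calc ‖f p.1‖ = ‖f p.2 + (f p.1 - f p.2)‖ := by ring_nf
      _ ≤ ‖f p.2‖ + ‖f p.1 - f p.2‖ := norm_add_le _ _
  have h3 : Q ≤ D₀ * A2 := by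
    rw [hQdef, Finset.sum_comm, hA2def, Finset.mul_sum]
    refine Finset.sum_le_sum fun u hu => ?_
    rw [← Finset.sum_mul]
    refine mul_le_mul_of_nonneg_right ?_ (by positivity)
    calc ∑ v ∈ S₁, w u v = ∑ v ∈ S₁, w v u := Finset.sum_congr rfl fun v _ => hsymm u v
      _ ≤ D₀ := hD₀ u hu
  have h4 : R ≤ 2 * ω * N2 := by
    have step : R ≤ ∑ v, ∑ u, w u v * ‖f v - f u‖ ^ 2 := by
      rw [hRdef]
      calc ∑ v ∈ S₁, ∑ u ∈ S₀, w u v * ‖f v - f u‖ ^ 2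
          ≤ ∑ v ∈ S₁, ∑ u, w u v * ‖f v - f u‖ ^ 2 := by
            refine Finset.sum_le_sum fun v _ => ?_
            refine Finset.sum_le_sum_of_subset_of_nonneg (Finset.subset_univ _)
              fun u _ _ => mul_nonneg (hnonneg u v) (by positivity)
        _ ≤ ∑ v, ∑ u, w u v * ‖f v - f u‖ ^ 2 := by
            refine Finset.sum_le_sum_of_subset_of_nonneg (Finset.subset_univ _)
              fun v _ _ => Finset.sum_nonneg fun u _ =>
                mul_nonneg (hnonneg u v) (by positivity)
    have swap : ∑ v, ∑ u, w u v * ‖f v - f u‖ ^ 2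
        = ∑ u, ∑ v, w u v * ‖f u - f v‖ ^ 2 := by
      rw [Finset.sum_comm]
      refine Finset.sum_congr rfl fun u _ => Finset.sum_congr rfl fun v _ => ?_
      rw [norm_sub_rev]
    calc R ≤ ∑ v, ∑ u, w u v * ‖f v - f u‖ ^ 2 := step
      _ = ∑ u, ∑ v, w u v * ‖f u - f v‖ ^ 2 := swap
      _ ≤ 2 * ω * N2 := Hdir
  -- combine
  have hsK : 0 < Real.sqrt K₀ := Real.sqrt_pos.mpr hK₀pos
  have hB : B ≤ Real.sqrt (D₀ / K₀) * A + α * N := by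
    have hb1 : B ≤ Real.sqrt P / Real.sqrt K₀ := by
      rw [hBdef, ← Real.sqrt_div hPnn]
      refine Real.sqrt_le_sqrt ?_
      rw [le_div_iff₀ hK₀pos, mul_comm]
      exact h1
    have hQle : Real.sqrt Q ≤ Real.sqrt D₀ * A := by
      rw [hAdef, ← Real.sqrt_mul hD0nn]
      exact Real.sqrt_le_sqrt h3
    have hRle : Real.sqrt R ≤ Real.sqrt (2 * ω) * N := by
      rw [hNdef, ← Real.sqrt_mul (by positivity : (0:ℝ) ≤ 2 * ω)]
      exact Real.sqrt_le_sqrt h4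
    calc B ≤ Real.sqrt P / Real.sqrt K₀ := hb1
      _ ≤ (Real.sqrt Q + Real.sqrt R) / Real.sqrt K₀ := by gcongr
      _ ≤ (Real.sqrt D₀ * A + Real.sqrt (2 * ω) * N) / Real.sqrt K₀ := by
          have := add_le_add hQle hRle
          gcongr
      _ = Real.sqrt (D₀ / K₀) * A + α * N := by
          rw [hα, Real.sqrt_div hD0nn, Real.sqrt_div (by positivity : (0:ℝ) ≤ 2 * ω)]
          ring
  have hstep : N ≤ Real.sqrt (1 + D₀ / K₀) * A + α * N := by
    set y := Real.sqrt (D₀ / K₀) * A with hy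
    set z := α * N with hz
    have hynn : 0 ≤ y := mul_nonneg (Real.sqrt_nonneg _) hAnn
    have hznn : 0 ≤ z := mul_nonneg hαnn hNnn
    have hNform : N = Real.sqrt (A ^ 2 + B ^ 2) := by
      rw [hA2A, hB2B, hNdef, hN2]
    have hle1 : N ≤ Real.sqrt (A ^ 2 + (y + z) ^ 2) := by
      rw [hNform]
      refine Real.sqrt_le_sqrt (add_le_add_right ?_ _)
      exact pow_le_pow_left₀ hBnn hB 2
    have hle2 : Real.sqrt (A ^ 2 + (y + z) ^ 2) ≤ Real.sqrt (A ^ 2 + y ^ 2) + z :=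
      S10.sqrt_add_sq_le A y z hynn hznn
    have heq : Real.sqrt (A ^ 2 + y ^ 2) = Real.sqrt (1 + D₀ / K₀) * A := by
      have : A ^ 2 + y ^ 2 = (1 + D₀ / K₀) * A ^ 2 := by
        rw [hy, mul_pow, Real.sq_sqrt (by positivity : (0:ℝ) ≤ D₀ / K₀)]
        ring
      rw [this, Real.sqrt_mul (by positivity : (0:ℝ) ≤ 1 + D₀ / K₀), Real.sqrt_sq hAnn]
    calc N ≤ Real.sqrt (A ^ 2 + (y + z) ^ 2) := hle1
      _ ≤ Real.sqrt (A ^ 2 + y ^ 2) + z := hle2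
      _ = Real.sqrt (1 + D₀ / K₀) * A + α * N := by rw [heq, hz]
  have hfin : (1 - α) * N ≤ Real.sqrt (1 + D₀ / K₀) * A := by nlinarith [hstep]
  calc N = (1 - α)⁻¹ * ((1 - α) * N) := by field_simp
    _ ≤ (1 - α)⁻¹ * (Real.sqrt (1 + D₀ / K₀) * A) :=
        mul_le_mul_of_nonneg_left hfin (le_of_lt (inv_pos.mpr h1α))
    _ = (1 - α)⁻¹ * Real.sqrt (1 + D₀ / K₀) * A := by ring
end

section
/- Star graph sharpness: Let G be the unweighted star graph with center v₀ and leaves v₁,…,v_N (w(v₀,v_j)=1 for 1≤j≤N, all other weights 0), ν ≡ 1. Then for every f : V(G) → ℂ: ‖f‖₂ ≤ √(N+1) |f(v₀)| + ‖∇_w f‖₂, and equality holds for the constant function f ≡ 1. -/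
open Finset

/-- Edge weight of the unweighted star graph on `Fin (N+1)` with center `0`. -/
def starWeight (N : ℕ) (i j : Fin (N + 1)) : ℝ :=
  if (i = 0 ∧ j ≠ 0) ∨ (j = 0 ∧ i ≠ 0) then 1 else 0

/-- star graph sharpness. For the star graph with center `v₀ = 0` and
`N` leaves, every `f` satisfies `‖f‖₂ ≤ √(N+1) |f(v₀)| + ‖∇_w f‖₂`, and equality
holds for the constant function `f ≡ 1`. -/
theorem statement15 (N : ℕ) (hN : 1 ≤ N) :
    (∀ f : Fin (N + 1) → ℂ,
      Real.sqrt (∑ j, ‖f j‖ ^ 2) ≤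
        Real.sqrt (N + 1) * ‖f 0‖ +
          Real.sqrt (∑ i, ∑ j, ‖f i - f j‖ ^ 2 * starWeight N i j)) ∧
    Real.sqrt (∑ _j : Fin (N + 1), ‖(1 : ℂ)‖ ^ 2) =
      Real.sqrt (N + 1) * ‖(1 : ℂ)‖ +
        Real.sqrt (∑ i, ∑ j,
          ‖(1 : ℂ) - (1 : ℂ)‖ ^ 2 * starWeight N i j) := by
  constructor
  · intro f
    set u : EuclideanSpace ℂ (Fin (N + 1)) := WithLp.toLp 2 (fun _ => f 0) with hu
    set v : EuclideanSpace ℂ (Fin (N + 1)) := WithLp.toLp 2 (fun j => f j - f 0) with hv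
    have h1 : ‖u + v‖ = Real.sqrt (∑ j, ‖f j‖ ^ 2) := by
      rw [EuclideanSpace.norm_eq]
      congr 1
      refine Finset.sum_congr rfl fun j _ => ?_
      simp [hu, hv]
    have h2 : ‖u‖ = Real.sqrt (N + 1) * ‖f 0‖ := by
      rw [EuclideanSpace.norm_eq]
      have : ∑ (_j : Fin (N + 1)), ‖u _j‖ ^ 2 = (N + 1) * ‖f 0‖ ^ 2 := by
        simp [hu, Finset.sum_const, nsmul_eq_mul]
      rw [this, Real.sqrt_mul (by positivity), Real.sqrt_sq (norm_nonneg _)]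
    have hvle : ∑ j, ‖f j - f 0‖ ^ 2 ≤
        ∑ i, ∑ j, ‖f i - f j‖ ^ 2 * starWeight N i j := by
      have heq : ∀ i : Fin (N + 1), ‖f i - f 0‖ ^ 2 =
          ‖f i - f 0‖ ^ 2 * starWeight N i 0 := by
        intro i
        rcases eq_or_ne i 0 with hi | hi
        · simp [hi, starWeight]
        · simp [starWeight, hi]
      calc ∑ j, ‖f j - f 0‖ ^ 2
          = ∑ i, ‖f i - f 0‖ ^ 2 * starWeight N i 0 := by
            exact Finset.sum_congr rfl fun i _ => heq i
        _ ≤ ∑ i, ∑ j, ‖f i - f j‖ ^ 2 * starWeight N i j := by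
            refine Finset.sum_le_sum fun i _ => ?_
            refine Finset.single_le_sum (f := fun j => ‖f i - f j‖ ^ 2 * starWeight N i j) (fun j _ => ?_) (Finset.mem_univ 0)
            have : (0:ℝ) ≤ starWeight N i j := by unfold starWeight; positivity
            positivity
    have h3 : ‖v‖ ≤ Real.sqrt (∑ i, ∑ j, ‖f i - f j‖ ^ 2 * starWeight N i j) := by
      rw [EuclideanSpace.norm_eq]
      apply Real.sqrt_le_sqrt
      refine le_trans (le_of_eq ?_) hvle
      exact Finset.sum_congr rfl fun j _ => by simp [hv]
    calc Real.sqrt (∑ j, ‖f j‖ ^ 2) = ‖u + v‖ := h1.symm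
      _ ≤ ‖u‖ + ‖v‖ := norm_add_le u v
      _ ≤ Real.sqrt (N + 1) * ‖f 0‖ +
          Real.sqrt (∑ i, ∑ j, ‖f i - f j‖ ^ 2 * starWeight N i j) := by
          rw [h2]; exact add_le_add_right h3 _
  · simp only [sub_self, map_zero, map_one, norm_zero, norm_one, one_pow, ne_eq, zero_pow, zero_mul,
      Finset.sum_const_zero, Real.sqrt_zero, add_zero, mul_one]
    simp [Finset.sum_const]
end

section
/- Graph-theoretic sampling constants on ℤ: For the Cayley graph of ℤ with generators ±1 and S = kℤ with k = 2n+1 odd, using the partition S_m = {±m} + kℤ for 0 ≤ m ≤ n, the constants are D₀ = 2, K₀ = 1, D_m = K_m = 1 for 1 ≤ m ≤ n−1, and hence a_{S,2} = (∑_{m=0}^{n} ∏_{j=0}^{m−1} D_j/K_j)^{1/2} = √k and δ_{S,2} = (∑_{m=1}^{n} ∑_{j=1}^{m} K_{j−1}^{−1} ∏_{i=j}^{m−1} D_i/K_i)^{1/2} = √(n(n+1)/2). -/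
open Finset

/-- The sets `S_m = {±m} + kℤ` of the partition of `ℤ` used for sampling on `S₀ = kℤ`
(for `m = 0` this is `kℤ` itself). -/
def sampSet (k : ℤ) (m : ℕ) : Set ℤ :=
  {x | ∃ l : ℤ, x = (m : ℤ) + k * l ∨ x = -(m : ℤ) + k * l}

open Classical in
/-- `w_A(v)` for the Cayley graph of `ℤ` with generators `±1`: the number of
neighbours of `v` lying in `A`. -/
noncomputable def wAInt (A : Set ℤ) (v : ℤ) : ℝ :=
  (if v + 1 ∈ A then 1 else 0) + (if v - 1 ∈ A then 1 else 0)

lemma mem_sampSet_iff {k : ℤ} {m : ℕ} {x : ℤ} :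
    x ∈ sampSet k m ↔ k ∣ x - m ∨ k ∣ x + m := by
  constructor
  · rintro ⟨l, h | h⟩
    · exact Or.inl ⟨l, by linarith⟩
    · exact Or.inr ⟨l, by linarith⟩
  · rintro (⟨l, h⟩ | ⟨l, h⟩)
    · exact ⟨l, Or.inl (by linarith)⟩
    · exact ⟨l, Or.inr (by linarith)⟩

lemma not_dvd_of_small {k e : ℤ} (h0 : e ≠ 0) (h1 : |e| < k) : ¬ k ∣ e :=
  fun h => h0 (Int.eq_zero_of_abs_lt_dvd h h1)

lemma not_dvd_shift {k a b e : ℤ} (ha : k ∣ a) (he : b - a = e) (h0 : e ≠ 0)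
    (h1 : |e| < k) : ¬ k ∣ b :=
  fun hb => not_dvd_of_small h0 h1 (he ▸ hb.sub ha)

lemma sumD : ∀ n : ℕ, (∑ m ∈ Finset.range (n + 1),
    ∏ j ∈ Finset.range m, (if j = 0 then (2:ℝ) else 1) / 1) = 2 * n + 1 := by
  have hp : ∀ m : ℕ, (∏ j ∈ Finset.range m, (if j = 0 then (2:ℝ) else 1) / 1)
      = if m = 0 then 1 else 2 := by
    intro m
    induction m with
    | zero => simp
    | succ m ih =>
      rw [Finset.prod_range_succ, ih]
      rcases Nat.eq_zero_or_pos m with h | h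
      · subst h; norm_num
      · rw [if_neg h.ne', if_neg (Nat.succ_ne_zero m)]
        rw [if_neg h.ne']
        norm_num
  intro n
  induction n with
  | zero => simp [hp]
  | succ n ih =>
    rw [Finset.sum_range_succ, ih, hp, if_neg (Nat.succ_ne_zero n)]
    push_cast; ring

lemma gauss : ∀ n : ℕ, (∑ m ∈ Finset.Icc 1 n, (m : ℝ)) = n * (n + 1) / 2 := by
  intro n
  induction n with
  | zero => simp
  | succ n ih =>
    rw [Finset.sum_Icc_succ_top (by omega : 1 ≤ n + 1), ih]
    push_cast; ring

/-- graph-theoretic sampling constants on `ℤ` for `S = kℤ`,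
`k = 2n + 1` odd, with the partition `S_m = {±m} + kℤ`, `0 ≤ m ≤ n`:
`D₀ = 2`, `K₀ = 1`, `D_m = K_m = 1` for `1 ≤ m ≤ n − 1`, hence
`a_{S,2} = √k` and `δ_{S,2} = √(n(n+1)/2)`. -/
theorem statement18 (n : ℕ) (hn : 1 ≤ n) (k : ℤ) (hk : k = 2 * n + 1)
    (D K : ℕ → ℝ) (hD : D = fun m => if m = 0 then 2 else 1) (hK : K = fun _ => 1) :
    (∀ v ∈ sampSet k 0, wAInt (sampSet k 1) v = 2) ∧
    (∀ m : ℕ, 1 ≤ m → m < n → ∀ v ∈ sampSet k m, wAInt (sampSet k (m + 1)) v = 1) ∧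
    (∀ m : ℕ, m < n → ∀ v ∈ sampSet k (m + 1), wAInt (sampSet k m) v = 1) ∧
    Real.sqrt (∑ m ∈ Finset.range (n + 1), ∏ j ∈ Finset.range m, D j / K j) =
      Real.sqrt (2 * n + 1) ∧
    Real.sqrt (∑ m ∈ Finset.Icc 1 n, ∑ j ∈ Finset.Icc 1 m,
        (K (j - 1))⁻¹ * ∏ i ∈ Finset.Ico j m, D i / K i) =
      Real.sqrt (n * (n + 1) / 2) := by
  have hn1 : (1 : ℤ) ≤ (n : ℤ) := by exact_mod_cast hn
  refine ⟨?_, ?_, ?_, ?_, ?_⟩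
  · -- D₀ = 2
    intro v hv
    rw [mem_sampSet_iff] at hv
    have hdvd : k ∣ v := by rcases hv with h | h <;> simpa using h
    have h1 : v + 1 ∈ sampSet k 1 := mem_sampSet_iff.2 (Or.inl (by simpa using hdvd))
    have h2 : v - 1 ∈ sampSet k 1 := mem_sampSet_iff.2 (Or.inr (by simpa using hdvd))
    rw [wAInt, if_pos h1, if_pos h2]; norm_num
  · -- D_m = 1 for 1 ≤ m < n
    intro m hm hmn v hv
    have hm1 : (1 : ℤ) ≤ (m : ℤ) := by exact_mod_cast hm
    have hmn' : (m : ℤ) < (n : ℤ) := by exact_mod_cast hmn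
    rw [mem_sampSet_iff] at hv
    rcases hv with hA | hA
    · have h1 : v + 1 ∈ sampSet k (m + 1) :=
        mem_sampSet_iff.2 (Or.inl (by push_cast; convert hA using 1; ring))
      have h2 : v - 1 ∉ sampSet k (m + 1) := by
        rw [mem_sampSet_iff]
        push_cast
        rintro (h | h)
        · exact not_dvd_shift hA
            (by ring : v - 1 - ((m:ℤ) + 1) - (v - m) = -2) (by norm_num)
            (abs_lt.2 ⟨by omega, by omega⟩) h
        · exact not_dvd_shift hA (by ring : v - 1 + ((m:ℤ) + 1) - (v - m) = 2 * m)
            (by omega) (abs_lt.2 ⟨by omega, by omega⟩) h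
      rw [wAInt, if_pos h1, if_neg h2]; norm_num
    · have h1 : v - 1 ∈ sampSet k (m + 1) :=
        mem_sampSet_iff.2 (Or.inr (by push_cast; convert hA using 1; ring))
      have h2 : v + 1 ∉ sampSet k (m + 1) := by
        rw [mem_sampSet_iff]
        push_cast
        rintro (h | h)
        · exact not_dvd_shift hA
            (by ring : v + 1 - ((m:ℤ) + 1) - (v + m) = -(2 * m))
            (by omega) (abs_lt.2 ⟨by omega, by omega⟩) h
        · exact not_dvd_shift hA (by ring : v + 1 + ((m:ℤ) + 1) - (v + m) = 2)
            (by norm_num) (abs_lt.2 ⟨by omega, by omega⟩) h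
      rw [wAInt, if_neg h2, if_pos h1]; norm_num
  · -- K_m = 1 for m < n
    intro m hmn v hv
    have hmn' : (m : ℤ) < (n : ℤ) := by exact_mod_cast hmn
    have hm0 : (0 : ℤ) ≤ (m : ℤ) := Int.natCast_nonneg m
    rw [mem_sampSet_iff] at hv
    push_cast at hv
    rcases hv with hA | hA
    · have h1 : v - 1 ∈ sampSet k m :=
        mem_sampSet_iff.2 (Or.inl (by
          have : v - 1 - (m : ℤ) = v - ((m : ℤ) + 1) := by ring
          rw [this]; exact hA))
      have h2 : v + 1 ∉ sampSet k m := by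
        rw [mem_sampSet_iff]
        rintro (h | h)
        · exact not_dvd_shift hA
            (by ring : v + 1 - (m:ℤ) - (v - ((m:ℤ) + 1)) = 2)
            (by norm_num) (abs_lt.2 ⟨by omega, by omega⟩) h
        · exact not_dvd_shift hA
            (by ring : v + 1 + (m:ℤ) - (v - ((m:ℤ) + 1)) = 2 * m + 2)
            (by omega) (abs_lt.2 ⟨by omega, by omega⟩) h
      rw [wAInt, if_neg h2, if_pos h1]; norm_num
    · have h1 : v + 1 ∈ sampSet k m :=
        mem_sampSet_iff.2 (Or.inr (by
          have : v + 1 + (m : ℤ) = v + ((m : ℤ) + 1) := by ring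
          rw [this]; exact hA))
      have h2 : v - 1 ∉ sampSet k m := by
        rw [mem_sampSet_iff]
        rintro (h | h)
        · exact not_dvd_shift hA
            (by ring : v - 1 - (m:ℤ) - (v + ((m:ℤ) + 1)) = -(2 * m + 2))
            (by omega) (abs_lt.2 ⟨by omega, by omega⟩) h
        · exact not_dvd_shift hA
            (by ring : v - 1 + (m:ℤ) - (v + ((m:ℤ) + 1)) = -2)
            (by norm_num) (abs_lt.2 ⟨by omega, by omega⟩) h
      rw [wAInt, if_pos h1, if_neg h2]; norm_num
  · -- a_{S,2}
    subst hD hK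
    rw [sumD n]
  · -- δ_{S,2}
    subst hD hK
    congr 1
    have : ∀ m ∈ Finset.Icc 1 n, (∑ j ∈ Finset.Icc 1 m,
        ((1:ℝ))⁻¹ * ∏ i ∈ Finset.Ico j m, (if i = 0 then (2:ℝ) else 1) / 1)
        = (m : ℝ) := by
      intro m hm
      have : ∀ j ∈ Finset.Icc 1 m, ((1:ℝ))⁻¹ *
          (∏ i ∈ Finset.Ico j m, (if i = 0 then (2:ℝ) else 1) / 1) = 1 := by
        intro j hj
        rw [Finset.prod_eq_one, inv_one, mul_one]
        intro i hi
        rw [Finset.mem_Ico] at hi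
        rw [Finset.mem_Icc] at hj
        rw [if_neg (by omega : i ≠ 0)]
        norm_num
      rw [Finset.sum_congr rfl this, Finset.sum_const, Nat.card_Icc]
      simp
    rw [Finset.sum_congr rfl this, gauss]
end

section
/- Sampling on ℤ (sufficient condition via graph estimates): Let S = kℤ with k = 2n+1 odd, and let f ∈ ℓ²(ℤ) satisfy ‖∇ f‖₂ ≤ ε ‖f‖₂ with ε √(n(n+1)/2) < 1, where ‖∇ f‖₂² = 2∑_{m∈ℤ} |f(m+1) − f(m)|². Then (1 − ε √(n(n+1)/2)) / √k · ‖f‖₂ ≤ ‖f|_S‖₂ ≤ ‖f‖₂. -/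
open Finset
open scoped ENNReal


lemma minkowski_tsum {ι : Type*} (a b : ι → ℂ)
    (ha : Summable fun i => ‖a i‖ ^ 2) (hb : Summable fun i => ‖b i‖ ^ 2) :
    Real.sqrt (∑' i, ‖a i + b i‖ ^ 2) ≤
      Real.sqrt (∑' i, ‖a i‖ ^ 2) + Real.sqrt (∑' i, ‖b i‖ ^ 2) := by
  have h2 : (0:ℝ) < (2 : ℝ≥0∞).toReal := by norm_num
  have hconv : ∀ g : ι → ℂ, (fun i => ‖g i‖ ^ (2 : ℝ≥0∞).toReal) = fun i => ‖g i‖ ^ 2 := by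
    intro g; funext i
    rw [show (2 : ℝ≥0∞).toReal = ((2:ℕ):ℝ) by norm_num, Real.rpow_natCast]
  have hma : Memℓp a 2 := memℓp_gen (by rw [hconv]; exact ha)
  have hmb : Memℓp b 2 := memℓp_gen (by rw [hconv]; exact hb)
  set A : lp (fun _ : ι => ℂ) 2 := ⟨a, hma⟩ with hA
  set B : lp (fun _ : ι => ℂ) 2 := ⟨b, hmb⟩ with hB
  have hnorm : ∀ C : lp (fun _ : ι => ℂ) 2,
      Real.sqrt (∑' i, ‖C i‖ ^ 2) = ‖C‖ := by
    intro C
    have := lp.norm_rpow_eq_tsum h2 C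
    rw [hconv] at this
    rw [show (2 : ℝ≥0∞).toReal = ((2:ℕ):ℝ) by norm_num, Real.rpow_natCast] at this
    rw [← this, Real.sqrt_sq (norm_nonneg _)]
  have hAB : ∀ i, (A + B) i = a i + b i := fun i => rfl
  calc Real.sqrt (∑' i, ‖a i + b i‖ ^ 2)
      = Real.sqrt (∑' i, ‖(A + B) i‖ ^ 2) := by simp only [hAB]
    _ = ‖A + B‖ := hnorm _
    _ ≤ ‖A‖ + ‖B‖ := norm_add_le _ _
    _ = _ := by rw [← hnorm A, ← hnorm B]

lemma tsum_partition (n : ℕ) (k : ℤ) (hk : k = 2*(n:ℤ)+1) (a : ℤ → ℝ) (ha : Summable a) :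
    ∑' m : ℤ, a m = ∑ j ∈ Finset.range (2*n+1), ∑' l : ℤ, a (k * l + ((j:ℤ) - n)) := by
  have hk0 : (0:ℤ) < k := by omega
  have hbij : Function.Bijective
      (fun p : Fin (2*n+1) × ℤ => k * p.2 + (((p.1 : ℕ) : ℤ) - n)) := by
    constructor
    · rintro ⟨⟨j1, hj1⟩, l1⟩ ⟨⟨j2, hj2⟩, l2⟩ hEq
      simp only at hEq
      have hd : k * (l1 - l2) = (j2 : ℤ) - j1 := by ring_nf; linarith [hEq]
      have hdvd : k ∣ ((j2 : ℤ) - j1) := ⟨l1 - l2, hd.symm⟩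
      have habs : |(j2 : ℤ) - j1| < k := by
        have h1 : (j1 : ℤ) < 2*n+1 := by exact_mod_cast hj1
        have h2 : (j2 : ℤ) < 2*n+1 := by exact_mod_cast hj2
        rw [abs_lt]; omega
      have hj : (j2 : ℤ) - j1 = 0 := Int.eq_zero_of_abs_lt_dvd hdvd habs
      have hjj : j1 = j2 := by omega
      have hl : l1 = l2 := by
        subst hjj
        have : k * l1 = k * l2 := by omega
        exact mul_left_cancel₀ (by omega) this
      simp [hjj, hl]
    · intro m
      have h1 : 0 ≤ (m + n) % k := Int.emod_nonneg _ (by omega)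
      have h2 : (m + n) % k < k := Int.emod_lt_of_pos _ hk0
      refine ⟨⟨⟨((m + n) % k).toNat, by omega⟩, (m + n) / k⟩, ?_⟩
      simp only
      have h3 : (((m + n) % k).toNat : ℤ) = (m + n) % k := Int.toNat_of_nonneg h1
      have h4 := Int.mul_ediv_add_emod (m + n) k
      rw [h3]; linarith
  let e := Equiv.ofBijective _ hbij
  have hsum : Summable fun p : Fin (2*n+1) × ℤ => a (e p) := by
    exact (e.summable_iff (f := a)).mpr ha
  calc ∑' m : ℤ, a m = ∑' p : Fin (2*n+1) × ℤ, a (e p) := (e.tsum_eq a).symm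
    _ = ∑' (j : Fin (2*n+1)), ∑' (l : ℤ), a (e (j, l)) := by
        refine Summable.tsum_prod' hsum fun j => ?_
        exact hsum.comp_injective fun l1 l2 h => (Prod.ext_iff.mp h).2
    _ = ∑ j : Fin (2*n+1), ∑' (l : ℤ), a (k * l + ((j:ℤ) - n)) := tsum_fintype _
    _ = _ := by rw [← Fin.sum_univ_eq_sum_range (fun j => ∑' (l : ℤ), a (k * l + ((j:ℤ) - n)))]

lemma minkowski_fin (m : ℕ) (u v : ℕ → ℝ) :
    Real.sqrt (∑ j ∈ Finset.range m, (u j + v j)^2) ≤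
      Real.sqrt (∑ j ∈ Finset.range m, (u j)^2) +
        Real.sqrt (∑ j ∈ Finset.range m, (v j)^2) := by
  let x : EuclideanSpace ℝ (Fin m) := WithLp.toLp 2 (fun i => u i)
  let y : EuclideanSpace ℝ (Fin m) := WithLp.toLp 2 (fun i => v i)
  have h := norm_add_le x y
  rw [EuclideanSpace.norm_eq, EuclideanSpace.norm_eq, EuclideanSpace.norm_eq] at h
  simpa [x, y, Real.norm_eq_abs, sq_abs, PiLp.add_apply,
    Fin.sum_univ_eq_sum_range (fun j => (u j + v j)^2),
    Fin.sum_univ_eq_sum_range (fun j => (u j)^2),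
    Fin.sum_univ_eq_sum_range (fun j => (v j)^2)] using h

lemma sum_c (n : ℕ) : ∑ j ∈ Finset.range (2*n+1), ((j-n)+(n-j)) = n*(n+1) := by
  have h1 : ∑ j ∈ Finset.range (2*n+1), (j - n) = ∑ j ∈ Finset.range (2*n+1), (n - j) := by
    rw [← Finset.sum_range_reflect (fun j => j - n) (2*n+1)]
    exact Finset.sum_congr rfl fun j hj => by
      simp only [Finset.mem_range] at hj; omega
  have h2 : ∑ j ∈ Finset.range (2*n+1), (n - j) = ∑ j ∈ Finset.range (n+1), (n - j) := by
    symm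
    apply Finset.sum_subset
    · exact Finset.range_subset_range.mpr (by omega)
    · intro j _ hj; simp only [Finset.mem_range] at hj; omega
  have h3 : ∑ j ∈ Finset.range (n+1), (n - j) = ∑ j ∈ Finset.range (n+1), j := by
    rw [← Finset.sum_range_reflect (fun j => j) (n+1)]
    exact Finset.sum_congr rfl fun j hj => by
      simp only [Finset.mem_range] at hj; omega
  have h4 := Finset.sum_range_id_mul_two (n+1)
  have h5 : n*(n+1) = (∑ j ∈ Finset.range (n+1), j) * 2 := by rw [h4, Nat.add_sub_cancel]; ring
  rw [Finset.sum_add_distrib, h1, h2, h3, h5]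
  ring


/-- sampling on `ℤ` via graph estimates. Let `S = kℤ`, `k = 2n+1` odd.
If `f ∈ ℓ²(ℤ)` satisfies `‖∇f‖₂ ≤ ε ‖f‖₂` with `ε √(n(n+1)/2) < 1`, then
`(1 − ε √(n(n+1)/2))/√k ⬝ ‖f‖₂ ≤ ‖f|_S‖₂ ≤ ‖f‖₂`. -/
theorem statement19 (n : ℕ) (hn : 1 ≤ n) (k : ℤ) (hk : k = 2 * n + 1)
    (f : ℤ → ℂ) (hf2 : Summable fun m : ℤ => ‖f m‖ ^ 2)
    (hgrad2 : Summable fun m : ℤ => ‖f (m + 1) - f m‖ ^ 2)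
    (ε : ℝ) (hε : 0 ≤ ε)
    (hBern : Real.sqrt (2 * ∑' m : ℤ, ‖f (m + 1) - f m‖ ^ 2) ≤
      ε * Real.sqrt (∑' m : ℤ, ‖f m‖ ^ 2))
    (hεδ : ε * Real.sqrt (n * (n + 1) / 2) < 1) :
    (1 - ε * Real.sqrt (n * (n + 1) / 2)) / Real.sqrt (2 * n + 1) *
        Real.sqrt (∑' m : ℤ, ‖f m‖ ^ 2) ≤
      Real.sqrt (∑' l : ℤ, ‖f (k * l)‖ ^ 2) ∧
    Real.sqrt (∑' l : ℤ, ‖f (k * l)‖ ^ 2) ≤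
      Real.sqrt (∑' m : ℤ, ‖f m‖ ^ 2) := by
  have hk0 : (0:ℤ) < k := by omega
  set T := ∑' m : ℤ, ‖f m‖ ^ 2 with hTdef
  set G := ∑' m : ℤ, ‖f (m + 1) - f m‖ ^ 2 with hGdef
  have hT0 : (0:ℝ) ≤ T := tsum_nonneg fun m => by positivity
  have hG0 : (0:ℝ) ≤ G := tsum_nonneg fun m => by positivity
  have hinj : ∀ c : ℤ, Function.Injective (fun l : ℤ => k * l + c) := by
    intro c l1 l2 h
    simp only at h
    have h' : k * l1 = k * l2 := by omega
    exact mul_left_cancel₀ (by omega) h'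
  have hSc : ∀ c : ℤ, Summable fun l : ℤ => ‖f (k * l + c)‖ ^ 2 :=
    fun c => hf2.comp_injective (hinj c)
  have hSg : ∀ c : ℤ, Summable fun l : ℤ => ‖f (k * l + c + 1) - f (k * l + c)‖ ^ 2 :=
    fun c => hgrad2.comp_injective (hinj c)
  set N : ℤ → ℝ := fun c => Real.sqrt (∑' l : ℤ, ‖f (k * l + c)‖ ^ 2) with hN
  set g : ℤ → ℝ :=
    fun c => Real.sqrt (∑' l : ℤ, ‖f (k * l + c + 1) - f (k * l + c)‖ ^ 2) with hg
  have hN0 : ∀ c, 0 ≤ N c := fun c => Real.sqrt_nonneg _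
  have hg0 : ∀ c, 0 ≤ g c := fun c => Real.sqrt_nonneg _
  have hNsq : ∀ c, N c ^ 2 = ∑' l : ℤ, ‖f (k * l + c)‖ ^ 2 :=
    fun c => Real.sq_sqrt (tsum_nonneg fun l => by positivity)
  have hgsq : ∀ c, g c ^ 2 = ∑' l : ℤ, ‖f (k * l + c + 1) - f (k * l + c)‖ ^ 2 :=
    fun c => Real.sq_sqrt (tsum_nonneg fun l => by positivity)
  have hargeq : ∀ l c : ℤ, k * l + (c + 1) = k * l + c + 1 := fun l c => by ring
  -- triangle steps
  have step1 : ∀ c : ℤ, N (c + 1) ≤ N c + g c := by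
    intro c
    have h := minkowski_tsum (fun l => f (k * l + c))
      (fun l => f (k * l + c + 1) - f (k * l + c)) (hSc c) (hSg c)
    have harg : (fun l : ℤ => ‖f (k * l + (c + 1))‖ ^ 2) =
        fun l : ℤ => ‖f (k * l + c) + (f (k * l + c + 1) - f (k * l + c))‖ ^ 2 := by
      funext l
      rw [hargeq l c]
      congr 1
      congr 1
      ring
    calc N (c + 1) =
        Real.sqrt (∑' l : ℤ, ‖f (k * l + c) + (f (k * l + c + 1) - f (k * l + c))‖ ^ 2) := by
          rw [hN]; simp only [harg]
      _ ≤ N c + g c := h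
  have step2 : ∀ c : ℤ, N c ≤ N (c + 1) + g c := by
    intro c
    have hSb : Summable fun l : ℤ => ‖f (k * l + c) - f (k * l + c + 1)‖ ^ 2 := by
      have := hSg c
      refine this.congr fun l => ?_
      rw [norm_sub_rev]
    have hSa : Summable fun l : ℤ => ‖f (k * l + c + 1)‖ ^ 2 := by
      have := hSc (c + 1)
      refine this.congr fun l => ?_
      rw [hargeq l c]
    have h := minkowski_tsum (fun l => f (k * l + c + 1))
      (fun l => f (k * l + c) - f (k * l + c + 1)) hSa hSb
    have harg : (fun l : ℤ => ‖f (k * l + c)‖ ^ 2) =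
        fun l : ℤ => ‖f (k * l + c + 1) + (f (k * l + c) - f (k * l + c + 1))‖ ^ 2 := by
      funext l; congr 1; congr 1; ring
    have hb : Real.sqrt (∑' l : ℤ, ‖f (k * l + c) - f (k * l + c + 1)‖ ^ 2) = g c := by
      rw [hg]
      congr 1
      exact tsum_congr fun l => by rw [norm_sub_rev]
    have ha : Real.sqrt (∑' l : ℤ, ‖f (k * l + c + 1)‖ ^ 2) = N (c + 1) := by
      rw [hN]
      congr 1
      exact tsum_congr fun l => by rw [hargeq l c]
    calc N c = Real.sqrt
          (∑' l : ℤ, ‖f (k * l + c + 1) + (f (k * l + c) - f (k * l + c + 1))‖ ^ 2) := by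
          rw [hN]; simp only [harg]
      _ ≤ _ + _ := h
      _ = N (c + 1) + g c := by rw [hb, ha]
  -- inductive bounds
  have hpos : ∀ d : ℕ, N d ≤ N 0 + ∑ i ∈ Finset.range d, g i := by
    intro d
    induction d with
    | zero => simp
    | succ m ih =>
      have e : ((m + 1 : ℕ) : ℤ) = (m : ℤ) + 1 := by push_cast; ring
      rw [e, Finset.sum_range_succ]
      have := step1 (m : ℤ)
      linarith
  have hneg : ∀ d : ℕ, N (-(d : ℤ)) ≤ N 0 + ∑ i ∈ Finset.range d, g (-(i : ℤ) - 1) := by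
    intro d
    induction d with
    | zero => simp
    | succ m ih =>
      have e : (-(((m + 1 : ℕ)) : ℤ)) = (-(m : ℤ) - 1) := by push_cast; ring
      rw [e, Finset.sum_range_succ]
      have h2 := step2 (-(m : ℤ) - 1)
      have e2 : (-(m : ℤ) - 1 + 1) = -(m : ℤ) := by ring
      rw [e2] at h2
      linarith
  -- combined bound
  set B : ℕ → ℝ := fun j =>
    (∑ i ∈ Finset.range (j - n), g i) + ∑ i ∈ Finset.range (n - j), g (-(i : ℤ) - 1) with hB
  have hBnn : ∀ j, 0 ≤ B j := fun j => by
    rw [hB]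
    exact add_nonneg (Finset.sum_nonneg fun i _ => hg0 _) (Finset.sum_nonneg fun i _ => hg0 _)
  have hNB : ∀ j < 2 * n + 1, N ((j : ℤ) - n) ≤ N 0 + B j := by
    intro j hj
    rcases le_or_gt n j with hcase | hcase
    · have e : (j : ℤ) - n = ((j - n : ℕ) : ℤ) := by omega
      have eB : B j = ∑ i ∈ Finset.range (j - n), g i := by
        rw [hB]; simp [Nat.sub_eq_zero_of_le hcase]
      rw [e, eB]
      exact hpos (j - n)
    · have e : (j : ℤ) - n = -(((n - j : ℕ)) : ℤ) := by omega
      have eB : B j = ∑ i ∈ Finset.range (n - j), g (-(i : ℤ) - 1) := by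
        rw [hB]; simp [Nat.sub_eq_zero_of_le (le_of_lt hcase)]
      rw [e, eB]
      exact hneg (n - j)
  -- partitions
  have hTpart : T = ∑ j ∈ Finset.range (2 * n + 1), N ((j : ℤ) - n) ^ 2 := by
    have hp := tsum_partition n k (by exact_mod_cast hk) (fun m => ‖f m‖ ^ 2) hf2
    rw [hTdef, hp]
    exact Finset.sum_congr rfl fun j _ => (hNsq _).symm
  have hGpart : G = ∑ j ∈ Finset.range (2 * n + 1), g ((j : ℤ) - n) ^ 2 := by
    have hp := tsum_partition n k (by exact_mod_cast hk)
      (fun m => ‖f (m + 1) - f m‖ ^ 2) hgrad2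
    rw [hGdef, hp]
    exact Finset.sum_congr rfl fun j _ => (hgsq _).symm
  -- partial sums of g² bounded by G
  have hgsub : ∀ s : Finset ℕ, s ⊆ Finset.range (2 * n + 1) →
      ∑ j ∈ s, g ((j : ℤ) - n) ^ 2 ≤ G := by
    intro s hs
    rw [hGpart]
    exact Finset.sum_le_sum_of_subset_of_nonneg hs fun j _ _ => sq_nonneg _
  have hpossum : ∀ c : ℕ, c ≤ n → ∑ i ∈ Finset.range c, g (i : ℤ) ^ 2 ≤ G := by
    intro c hc
    have himg : ∑ i ∈ Finset.range c, g (i : ℤ) ^ 2 =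
        ∑ j ∈ (Finset.range c).image (· + n), g ((j : ℤ) - n) ^ 2 := by
      rw [Finset.sum_image (by intro x _ y _ h; simp only at h; omega)]
      exact Finset.sum_congr rfl fun i _ => by
        congr 2
        push_cast; ring
    rw [himg]
    refine hgsub _ ?_
    intro j hj
    simp only [Finset.mem_image, Finset.mem_range] at hj ⊢
    omega
  have hnegsum : ∀ c : ℕ, c ≤ n → ∑ i ∈ Finset.range c, g (-(i : ℤ) - 1) ^ 2 ≤ G := by
    intro c hc
    have himg : ∑ i ∈ Finset.range c, g (-(i : ℤ) - 1) ^ 2 =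
        ∑ j ∈ (Finset.range c).image (fun i => n - 1 - i), g ((j : ℤ) - n) ^ 2 := by
      rw [Finset.sum_image (by intro x hx y hy h; simp only [Finset.coe_range, Set.mem_Iio] at hx hy h; omega)]
      exact Finset.sum_congr rfl fun i hi => by
        simp only [Finset.mem_range] at hi
        congr 2
        omega
    rw [himg]
    refine hgsub _ ?_
    intro j hj
    simp only [Finset.mem_image, Finset.mem_range] at hj ⊢
    omega
  -- B j ^ 2 ≤ c_j * G
  have hBsq : ∀ j < 2 * n + 1, B j ^ 2 ≤ (((j - n) + (n - j) : ℕ) : ℝ) * G := by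
    intro j hj
    rcases le_or_gt n j with hcase | hcase
    · have eB : B j = ∑ i ∈ Finset.range (j - n), g i := by
        rw [hB]; simp [Nat.sub_eq_zero_of_le hcase]
      have hcs := sq_sum_le_card_mul_sum_sq (s := Finset.range (j - n)) (f := fun i => g (i : ℤ))
      rw [eB]
      have h1 : ∑ i ∈ Finset.range (j - n), g (i : ℤ) ^ 2 ≤ G := hpossum _ (by omega)
      have hcard : ((Finset.range (j - n)).card : ℝ) = ((j - n : ℕ) : ℝ) := by
        rw [Finset.card_range]
      calc (∑ i ∈ Finset.range (j - n), g (i : ℤ)) ^ 2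
          ≤ ((Finset.range (j - n)).card : ℝ) * ∑ i ∈ Finset.range (j - n), g (i : ℤ) ^ 2 := hcs
        _ ≤ ((j - n : ℕ) : ℝ) * G := by
            rw [hcard]
            exact mul_le_mul_of_nonneg_left h1 (by positivity)
        _ = (((j - n) + (n - j) : ℕ) : ℝ) * G := by
            congr 2
            omega
    · have eB : B j = ∑ i ∈ Finset.range (n - j), g (-(i : ℤ) - 1) := by
        rw [hB]; simp [Nat.sub_eq_zero_of_le (le_of_lt hcase)]
      have hcs := sq_sum_le_card_mul_sum_sq (s := Finset.range (n - j))
        (f := fun i => g (-(i : ℤ) - 1))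
      rw [eB]
      have h1 : ∑ i ∈ Finset.range (n - j), g (-(i : ℤ) - 1) ^ 2 ≤ G := hnegsum _ (by omega)
      calc (∑ i ∈ Finset.range (n - j), g (-(i : ℤ) - 1)) ^ 2
          ≤ ((Finset.range (n - j)).card : ℝ) *
              ∑ i ∈ Finset.range (n - j), g (-(i : ℤ) - 1) ^ 2 := hcs
        _ ≤ ((n - j : ℕ) : ℝ) * G := by
            rw [Finset.card_range]
            exact mul_le_mul_of_nonneg_left h1 (by positivity)
        _ = (((j - n) + (n - j) : ℕ) : ℝ) * G := by
            congr 2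
            omega
  -- sum of B²
  have hBsum : ∑ j ∈ Finset.range (2 * n + 1), B j ^ 2 ≤ ((n : ℝ) * (n + 1)) * G := by
    calc ∑ j ∈ Finset.range (2 * n + 1), B j ^ 2
        ≤ ∑ j ∈ Finset.range (2 * n + 1), (((j - n) + (n - j) : ℕ) : ℝ) * G :=
          Finset.sum_le_sum fun j hj => hBsq j (Finset.mem_range.mp hj)
      _ = (((∑ j ∈ Finset.range (2 * n + 1), ((j - n) + (n - j)) : ℕ)) : ℝ) * G := by
          rw [← Finset.sum_mul]
          congr 1
          rw [Nat.cast_sum]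
      _ = ((n : ℝ) * (n + 1)) * G := by
          rw [sum_c n]
          push_cast
          ring
  -- main chain
  set δ : ℝ := Real.sqrt ((n : ℝ) * ((n : ℝ) + 1) / 2) with hδ
  have hδ0 : 0 ≤ δ := Real.sqrt_nonneg _
  have hchain : Real.sqrt T ≤ Real.sqrt (2 * (n : ℝ) + 1) * N 0 + δ * (ε * Real.sqrt T) := by
    have s1 : Real.sqrt T ≤
        Real.sqrt (∑ j ∈ Finset.range (2 * n + 1), (N 0 + B j) ^ 2) := by
      apply Real.sqrt_le_sqrt
      rw [hTpart]
      apply Finset.sum_le_sum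
      intro j hj
      exact pow_le_pow_left₀ (hN0 _) (hNB j (Finset.mem_range.mp hj)) 2
    have s2 := minkowski_fin (2 * n + 1) (fun _ => N 0) B
    have s3 : Real.sqrt (∑ j ∈ Finset.range (2 * n + 1), (N 0) ^ 2) =
        Real.sqrt (2 * (n : ℝ) + 1) * N 0 := by
      rw [Finset.sum_const, Finset.card_range, nsmul_eq_mul]
      rw [show ((2 * n + 1 : ℕ) : ℝ) = 2 * (n : ℝ) + 1 by push_cast; ring]
      rw [Real.sqrt_mul (by positivity), Real.sqrt_sq (hN0 0)]
    have s4 : Real.sqrt (∑ j ∈ Finset.range (2 * n + 1), B j ^ 2) ≤ δ * (ε * Real.sqrt T) := by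
      have h1 : Real.sqrt (∑ j ∈ Finset.range (2 * n + 1), B j ^ 2) ≤
          Real.sqrt (((n : ℝ) * ((n : ℝ) + 1) / 2) * (2 * G)) := by
        apply Real.sqrt_le_sqrt
        calc ∑ j ∈ Finset.range (2 * n + 1), B j ^ 2 ≤ ((n : ℝ) * (n + 1)) * G := hBsum
          _ = ((n : ℝ) * ((n : ℝ) + 1) / 2) * (2 * G) := by ring
      have h2 : Real.sqrt (((n : ℝ) * ((n : ℝ) + 1) / 2) * (2 * G)) =
          δ * Real.sqrt (2 * G) := by
        rw [hδ, ← Real.sqrt_mul (by positivity)]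
      have h3 : δ * Real.sqrt (2 * G) ≤ δ * (ε * Real.sqrt T) :=
        mul_le_mul_of_nonneg_left hBern hδ0
      linarith
    calc Real.sqrt T ≤ Real.sqrt (∑ j ∈ Finset.range (2 * n + 1), (N 0 + B j) ^ 2) := s1
      _ ≤ Real.sqrt (∑ j ∈ Finset.range (2 * n + 1), (N 0) ^ 2) +
          Real.sqrt (∑ j ∈ Finset.range (2 * n + 1), B j ^ 2) := s2
      _ ≤ Real.sqrt (2 * (n : ℝ) + 1) * N 0 + δ * (ε * Real.sqrt T) := by
          rw [s3]
          exact add_le_add_right s4 _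
  constructor
  · -- lower bound
    have hgoal : Real.sqrt (∑' l : ℤ, ‖f (k * l)‖ ^ 2) = N 0 := by
      rw [hN]
      congr 1
      exact tsum_congr fun l => by rw [add_zero]
    rw [hgoal]
    have hkpos : (0:ℝ) < Real.sqrt (2 * (n : ℝ) + 1) := Real.sqrt_pos.mpr (by positivity)
    rw [div_mul_eq_mul_div, div_le_iff₀ hkpos]
    have key : (1 - ε * δ) * Real.sqrt T ≤ Real.sqrt (2 * (n : ℝ) + 1) * N 0 := by
      nlinarith [hchain]
    calc (1 - ε * δ) * Real.sqrt T ≤ Real.sqrt (2 * (n : ℝ) + 1) * N 0 := key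
      _ = N 0 * Real.sqrt (2 * (n : ℝ) + 1) := by ring
  · -- upper bound
    apply Real.sqrt_le_sqrt
    exact Summable.tsum_le_tsum_of_inj (fun l : ℤ => k * l)
      (fun l1 l2 h => mul_left_cancel₀ (by omega : k ≠ 0) h)
      (fun c _ => by positivity) (fun l => le_rfl)
      (hf2.comp_injective fun l1 l2 h => mul_left_cancel₀ (by omega : k ≠ 0) h) hf2
end
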